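/- arXiv:math/0001009 — 8 statements merged into one kernel-verified Lean document; each statement's English description precedes it below -/
import Mathlib

section
/- Let X be a Polish space, let f_1,…,f_m be homeomorphisms of X, and let (L_i, R_i), 1 ≤ i ≤ m, be a system of m congruences on {1,…,r}. Suppose (a) there is a solution A''_1,…,A''_r of the system in X such that f_i witnesses congruence i for each i, and (b) there is a quasi-solution A'_1,…,A'_r of the system in X consisting of nonmeager sets with the property of Baire such that f_i witnesses the i-th quasi-congruence for each i. Then there is a solution A_1,…,A_r of the system in X consisting of nonmeager sets with the property of Baire such that f_i witnesses congruence i for each i. -/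
/-- A set has the property of Baire iff its symmetric difference with some open set is meager. -/
def HasBaireProperty {X : Type*} [TopologicalSpace X] (A : Set X) : Prop :=
  ∃ U : Set X, IsOpen U ∧ IsMeagre (symmDiff A U)
open Set

lemma isMeagre_image {X : Type*} [TopologicalSpace X] (e : X ≃ₜ X) {s : Set X}
    (h : IsMeagre s) : IsMeagre (e '' s) := by
  rw [IsMeagre] at h ⊢
  rw [← Set.image_compl_eq e.bijective, ← e.residual_map_eq]
  simpa [Filter.mem_map, Set.preimage_image_eq _ e.injective] using h

lemma isMeagre_iUnion' {X : Type*} [TopologicalSpace X] {ι : Type*} [Countable ι]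
    {s : ι → Set X} (h : ∀ i, IsMeagre (s i)) : IsMeagre (⋃ i, s i) := by
  rw [IsMeagre, compl_iUnion]
  exact countable_iInter_mem.2 h

lemma isMeagre_union' {X : Type*} [TopologicalSpace X] {s t : Set X}
    (hs : IsMeagre s) (ht : IsMeagre t) : IsMeagre (s ∪ t) := by
  rw [IsMeagre, compl_union]; exact Filter.inter_mem hs ht

lemma isMeagre_empty' {X : Type*} [TopologicalSpace X] : IsMeagre (∅ : Set X) := by
  rw [IsMeagre, compl_empty]; exact Filter.univ_mem

/-- Iterated composition of generators/inverses. -/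
noncomputable def wordHomeo {X : Type*} [TopologicalSpace X] {m : ℕ} (f : Fin m → X ≃ₜ X) :
    List (Fin m × Bool) → X ≃ₜ X
  | [] => Homeomorph.refl X
  | p :: l => (wordHomeo f l).trans (if p.2 then f p.1 else (f p.1).symm)

/-- **Lemma 2.3.** Let `X` be a Polish space, `f 1, …, f m` homeomorphisms of `X`, and
`(L i, R i)` a system of `m` congruences on `{1,…,r}`.  If the system has a solution in `X`
with `f i` witnessing congruence `i`, and a quasi-solution by nonmeager sets with the property
of Baire with `f i` witnessing quasi-congruence `i`, then it has a solution by nonmeager sets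
with the property of Baire with `f i` witnessing congruence `i`. -/
theorem stmt_2 {X : Type*} [TopologicalSpace X] [PolishSpace X]
    {r m : ℕ} (L R : Fin m → Set (Fin r)) (f : Fin m → X ≃ₜ X)
    (A'' : Fin r → Set X)
    (hdisj'' : ∀ k k', k ≠ k' → Disjoint (A'' k) (A'' k'))
    (hcover'' : ⋃ k, A'' k = univ)
    (hwit'' : ∀ i, f i '' (⋃ k ∈ L i, A'' k) = ⋃ k ∈ R i, A'' k)
    (A' : Fin r → Set X)
    (hpb' : ∀ k, HasBaireProperty (A' k)) (hnm' : ∀ k, ¬ IsMeagre (A' k))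
    (hqd' : ∀ k k', k ≠ k' → IsMeagre (A' k ∩ A' k'))
    (hcover' : (⋃ k, A' k) ∈ residual X)
    (hwit' : ∀ i, IsMeagre (symmDiff (f i '' ⋃ k ∈ L i, A' k) (⋃ k ∈ R i, A' k))) :
    ∃ A : Fin r → Set X,
      (∀ k, HasBaireProperty (A k) ∧ ¬ IsMeagre (A k)) ∧
      (∀ k k', k ≠ k' → Disjoint (A k) (A k')) ∧
      (⋃ k, A k) = univ ∧
      (∀ i, f i '' (⋃ k ∈ L i, A k) = ⋃ k ∈ R i, A k) := by
  classical
  -- the basic meager set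
  set M : Set X := (⋃ k, A' k)ᶜ ∪
      (⋃ p : Fin r × Fin r, if p.1 = p.2 then ∅ else A' p.1 ∩ A' p.2) ∪
      (⋃ i, symmDiff (f i '' ⋃ k ∈ L i, A' k) (⋃ k ∈ R i, A' k)) with hM
  have hMmeagre : IsMeagre M := by
    refine isMeagre_union' (isMeagre_union' ?_ ?_) ?_
    · rwa [IsMeagre, compl_compl]
    · refine isMeagre_iUnion' fun p => ?_
      by_cases h : p.1 = p.2
      · simp [h, isMeagre_empty']
      · simp only [h, if_neg h, if_false]
        exact hqd' _ _ h
    · exact isMeagre_iUnion' hwit'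
  -- saturate under the group generated by the `f i`
  set M' : Set X := ⋃ l : List (Fin m × Bool), wordHomeo f l '' M with hM'
  have hM'meagre : IsMeagre M' :=
    isMeagre_iUnion' fun l => isMeagre_image _ hMmeagre
  have hMM' : M ⊆ M' := by
    intro x hx
    exact mem_iUnion.2 ⟨[], by simpa [wordHomeo] using hx⟩
  have himg : ∀ i, f i '' M' = M' := by
    intro i
    have key : ∀ (b : Bool), (if b then f i else (f i).symm) '' M' ⊆ M' := by
      intro b
      rw [hM', image_iUnion]
      refine iUnion_subset fun l => ?_
      refine subset_iUnion_of_subset ((i, b) :: l) ?_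
      intro x hx
      obtain ⟨y, hy, rfl⟩ := hx
      obtain ⟨z, hz, rfl⟩ := hy
      exact ⟨z, hz, by cases b <;> simp [wordHomeo]⟩
    apply subset_antisymm
    · simpa using key true
    · have h2 := key false
      simp only [if_neg Bool.false_ne_true, Bool.false_eq_true, if_false] at h2
      intro x hx
      have : (f i).symm x ∈ M' := h2 ⟨x, hx, rfl⟩
      exact ⟨(f i).symm x, this, by simp⟩
  set D : Set X := M'ᶜ with hD
  have hfD : ∀ i, f i '' D = D := by
    intro i
    rw [hD, Set.image_compl_eq (f i).bijective, himg]
  -- key properties on D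
  have hDsub : D ⊆ ⋃ k, A' k := by
    intro x hx
    by_contra h
    exact hx (hMM' (Or.inl (Or.inl h)))
  have hDdisj : ∀ k k', k ≠ k' → ∀ x ∈ D, x ∈ A' k → x ∈ A' k' → False := by
    intro k k' hkk' x hxD h1 h2
    apply hxD
    apply hMM'
    refine Or.inl (Or.inr (mem_iUnion.2 ⟨(k, k'), ?_⟩))
    simp [hkk', h1, h2]
  have hDwit : ∀ i, ∀ x ∈ D, (x ∈ f i '' ⋃ k ∈ L i, A' k ↔ x ∈ ⋃ k ∈ R i, A' k) := by
    intro i x hxD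
    constructor
    · intro h
      by_contra h2
      exact hxD (hMM' (Or.inr (mem_iUnion.2 ⟨i, Or.inl ⟨h, h2⟩⟩)))
    · intro h
      by_contra h2
      exact hxD (hMM' (Or.inr (mem_iUnion.2 ⟨i, Or.inr ⟨h, h2⟩⟩)))
  -- the solution
  refine ⟨fun k => (A' k ∩ D) ∪ (A'' k \ D), ?_, ?_, ?_, ?_⟩
  · intro k
    have hsd : symmDiff ((A' k ∩ D) ∪ (A'' k \ D)) (A' k) ⊆ M' := by
      intro x hx
      rcases hx with ⟨hx1, hx2⟩ | ⟨hx1, hx2⟩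
      · rcases hx1 with ⟨h, _⟩ | ⟨_, h⟩
        · exact absurd h hx2
        · exact not_not.1 h
      · by_contra h
        exact hx2 (Or.inl ⟨hx1, h⟩)
    have hsdM : IsMeagre (symmDiff ((A' k ∩ D) ∪ (A'' k \ D)) (A' k)) :=
      hM'meagre.mono hsd
    constructor
    · obtain ⟨U, hU, hUm⟩ := hpb' k
      exact ⟨U, hU, (isMeagre_union' hsdM hUm).mono (symmDiff_triangle _ (A' k) _)⟩
    · intro hmeag
      apply hnm' k
      have : A' k ⊆ ((A' k ∩ D) ∪ (A'' k \ D)) ∪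
          symmDiff ((A' k ∩ D) ∪ (A'' k \ D)) (A' k) := by
        intro x hx
        by_cases h : x ∈ (A' k ∩ D) ∪ (A'' k \ D)
        · exact Or.inl h
        · exact Or.inr (Or.inr ⟨hx, h⟩)
      exact (isMeagre_union' hmeag hsdM).mono this
  · intro k k' hkk'
    rw [Set.disjoint_left]
    rintro x (⟨h1, hxD⟩ | ⟨h1, hxD⟩) hx2
    · rcases hx2 with ⟨h2, _⟩ | ⟨_, h2⟩
      · exact hDdisj k k' hkk' x hxD h1 h2
      · exact h2 hxD
    · rcases hx2 with ⟨_, h2⟩ | ⟨h2, _⟩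
      · exact hxD h2
      · exact (hdisj'' k k' hkk').le_bot ⟨h1, h2⟩
  · ext x
    simp only [mem_iUnion, mem_univ, iff_true]
    by_cases hxD : x ∈ D
    · obtain ⟨k, hk⟩ := mem_iUnion.1 (hDsub hxD)
      exact ⟨k, Or.inl ⟨hk, hxD⟩⟩
    · have : x ∈ ⋃ k, A'' k := hcover'' ▸ mem_univ x
      obtain ⟨k, hk⟩ := mem_iUnion.1 this
      exact ⟨k, Or.inr ⟨hk, hxD⟩⟩
  · intro i
    have hsplit : ∀ B : Fin r → Set X, ∀ S : Set (Fin r),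
        (⋃ k ∈ S, ((B k ∩ D) ∪ (A'' k \ D))) =
          ((⋃ k ∈ S, B k) ∩ D) ∪ ((⋃ k ∈ S, A'' k) \ D) := by
      intro B S
      ext x
      simp only [mem_iUnion, mem_union, mem_inter_iff, mem_diff]
      constructor
      · rintro ⟨k, hk, ⟨h1, h2⟩ | ⟨h1, h2⟩⟩
        · exact Or.inl ⟨⟨k, hk, h1⟩, h2⟩
        · exact Or.inr ⟨⟨k, hk, h1⟩, h2⟩
      · rintro (⟨⟨k, hk, h1⟩, h2⟩ | ⟨⟨k, hk, h1⟩, h2⟩)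
        · exact ⟨k, hk, Or.inl ⟨h1, h2⟩⟩
        · exact ⟨k, hk, Or.inr ⟨h1, h2⟩⟩
    rw [hsplit A' (L i), hsplit A' (R i)]
    rw [image_union, Set.image_inter (f i).injective, Set.image_diff (f i).injective,
      hfD i, hwit'' i]
    congr 1
    ext x
    simp only [mem_inter_iff]
    constructor
    · rintro ⟨h1, h2⟩
      exact ⟨(hDwit i x h2).1 h1, h2⟩
    · rintro ⟨h1, h2⟩
      exact ⟨(hDwit i x h2).2 h1, h2⟩
end

section
/- Let A ⊆ S² be an open set and let ρ be a rotation of S² of infinite order about an axis ℓ. If ρ(A) = A, then τ(A) = A for every rotation τ of S² about the axis ℓ. -/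
noncomputable section

/-- Euclidean 3-space. -/
abbrev E3 := EuclideanSpace ℝ (Fin 3)

/-- The unit sphere `S²` in `ℝ³`. -/
def S2 : Set E3 := Metric.sphere 0 1

/-- The self-map of `S²` obtained by restricting a linear isometry equivalence of `ℝ³`
(an element of O(3)); such restrictions are exactly the isometries of `S²`. -/
def sphereMap (f : E3 ≃ₗᵢ[ℝ] E3) (x : S2) : S2 :=
  ⟨f x.1, by
    have hx : ‖(x : E3)‖ = 1 := by simpa [S2, mem_sphere_zero_iff_norm] using x.2
    simp [S2, mem_sphere_zero_iff_norm, f.norm_map, hx]⟩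

/-- An element of O(3) is a rotation iff it has determinant 1 (i.e. lies in SO(3)). -/
def IsRotation (f : E3 ≃ₗᵢ[ℝ] E3) : Prop :=
  LinearMap.det (f.toLinearEquiv : E3 →ₗ[ℝ] E3) = 1

end
/-- `ℓ` is a line through the origin in `ℝ³`. -/
def IsLine (ℓ : Submodule ℝ E3) : Prop := Module.finrank ℝ ℓ = 1

/-- `f` fixes the line `ℓ` pointwise, i.e. `f` is "about the axis `ℓ`". -/
def FixesAxis (f : E3 ≃ₗᵢ[ℝ] E3) (ℓ : Submodule ℝ E3) : Prop := ∀ v ∈ ℓ, f v = v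
open Set

open Submodule

section Helpers

variable {ℓ : Submodule ℝ E3}

lemma fixesAxis_symm {f : E3 ≃ₗᵢ[ℝ] E3} (hf : FixesAxis f ℓ) : FixesAxis f.symm ℓ := by
  intro v hv
  conv_lhs => rw [← hf v hv]
  exact f.symm_apply_apply v

lemma maps_orth {f : E3 ≃ₗᵢ[ℝ] E3} (hf : FixesAxis f ℓ) :
    ∀ w ∈ ℓᗮ, f w ∈ ℓᗮ := by
  intro w hw
  rw [Submodule.mem_orthogonal] at hw ⊢
  intro v hv
  calc (inner ℝ v (f w) : ℝ) = inner ℝ (f v) (f w) := by rw [hf v hv]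
    _ = (inner ℝ v w : ℝ) := f.inner_map_map v w
    _ = 0 := hw v hv

/-- restriction of an axis-fixing isometry to the orthogonal plane -/
noncomputable def restr (f : E3 ≃ₗᵢ[ℝ] E3) (hf : FixesAxis f ℓ) : ℓᗮ ≃ₗᵢ[ℝ] ℓᗮ where
  toLinearEquiv :=
  { toFun := fun w => ⟨f w, maps_orth hf w w.2⟩
    map_add' := fun a b => by ext; simp
    map_smul' := fun c a => by ext; simp
    invFun := fun w => ⟨f.symm w, maps_orth (fixesAxis_symm hf) w w.2⟩
    left_inv := fun a => by ext; simp
    right_inv := fun a => by ext; simp }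
  norm_map' := fun w => f.norm_map w

lemma restr_apply {f : E3 ≃ₗᵢ[ℝ] E3} (hf : FixesAxis f ℓ) (w : ℓᗮ) :
    f (w : E3) = ((restr f hf w : ℓᗮ) : E3) := rfl

lemma det_restr (hline : IsLine ℓ) {f : E3 ≃ₗᵢ[ℝ] E3} (hf : FixesAxis f ℓ) :
    LinearMap.det ((restr f hf).toLinearEquiv : ℓᗮ →ₗ[ℝ] ℓᗮ) =
      LinearMap.det (f.toLinearEquiv : E3 →ₗ[ℝ] E3) := by
  have h3 : Module.finrank ℝ E3 = 3 := finrank_euclideanSpace_fin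
  have hcompl : IsCompl ℓ ℓᗮ := Submodule.isCompl_orthogonal_of_hasOrthogonalProjection
  have h2 : Module.finrank ℝ ℓᗮ = 2 := by
    have := Submodule.finrank_add_finrank_orthogonal (K := ℓ)
    rw [hline, h3] at this
    omega
  set e := Submodule.prodEquivOfIsCompl ℓ ℓᗮ hcompl with he
  set g : ℓᗮ →ₗ[ℝ] ℓᗮ := ((restr f hf).toLinearEquiv : ℓᗮ →ₗ[ℝ] ℓᗮ) with hg
  have key0 : ∀ (v : ℓ) (w : ℓᗮ), f (e (v, w)) = e (v, restr f hf w) := by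
    intro v w
    have e1 : e (v, w) = (v : E3) + (w : E3) := rfl
    have e2 : e (v, restr f hf w) = (v : E3) + ((restr f hf w : ℓᗮ) : E3) := rfl
    rw [e1, e2, map_add, hf v v.2]
    rfl
  have key : (f.toLinearEquiv : E3 →ₗ[ℝ] E3) =
      (e : ℓ × ℓᗮ →ₗ[ℝ] E3) ∘ₗ (LinearMap.id.prodMap g) ∘ₗ (e.symm : E3 →ₗ[ℝ] ℓ × ℓᗮ) := by
    apply LinearMap.ext
    intro u
    conv_lhs => rw [show u = e (e.symm u) from (e.apply_symm_apply u).symm]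
    simp only [LinearMap.comp_apply, LinearEquiv.coe_coe, LinearMap.prodMap_apply,
      LinearMap.id_apply]
    have h := key0 (e.symm u).1 (e.symm u).2
    simpa [hg] using h
  rw [key, LinearMap.det_conj]
  have b₁ : Module.Basis (Fin 1) ℝ ℓ := Module.finBasisOfFinrankEq ℝ ℓ hline
  have b₂ : Module.Basis (Fin 2) ℝ ℓᗮ := Module.finBasisOfFinrankEq ℝ ℓᗮ h2
  rw [← LinearMap.det_toMatrix (b₁.prod b₂), LinearMap.toMatrix_prodMap,
    Matrix.det_fromBlocks_zero₂₁, LinearMap.det_toMatrix, LinearMap.det_toMatrix,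
    LinearMap.det_id, one_mul]

lemma dense_zmultiples_angle (θ : Real.Angle) (hθ : ∀ n : ℤ, n ≠ 0 → n • θ ≠ 0) :
    Dense (Set.range fun n : ℤ => n • θ) := by
  revert hθ
  refine Real.Angle.induction_on θ ?_
  intro x hθ
  set S := AddSubgroup.closure ({x, 2 * Real.pi} : Set ℝ) with hS
  rcases S.dense_or_cyclic with hd | ⟨a, ha⟩
  · have hsurj : DenseRange ((↑) : ℝ → Real.Angle) :=
      Function.Surjective.denseRange (fun ψ => Real.Angle.induction_on ψ fun y => ⟨y, rfl⟩)
    have himg : Dense (((↑) : ℝ → Real.Angle) '' (S : Set ℝ)) :=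
      hsurj.dense_image Real.Angle.continuous_coe hd
    refine himg.mono ?_
    rintro _ ⟨s, hs, rfl⟩
    have hle : S ≤ AddSubgroup.comap Real.Angle.coeHom
        (AddSubgroup.zmultiples ((x : ℝ) : Real.Angle)) := by
      rw [hS]
      apply AddSubgroup.closure_le _ |>.2
      rintro y (rfl | rfl)
      · exact ⟨1, one_zsmul _⟩
      · exact ⟨0, by simp [Real.Angle.coe_two_pi]⟩
    obtain ⟨n, hn⟩ := hle hs
    exact ⟨n, hn⟩
  · exfalso
    have hx : x ∈ S := AddSubgroup.subset_closure (by simp)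
    have h2π : (2 * Real.pi : ℝ) ∈ S := AddSubgroup.subset_closure (by simp)
    rw [ha, AddSubgroup.mem_closure_singleton] at hx h2π
    obtain ⟨m, hm⟩ := hx
    obtain ⟨k, hk⟩ := h2π
    have hk0 : k ≠ 0 := by
      rintro rfl
      rw [zero_zsmul] at hk
      exact Real.two_pi_pos.ne hk
    apply hθ k hk0
    calc k • ((x : ℝ) : Real.Angle) = ((k • x : ℝ) : Real.Angle) := (Real.Angle.coe_zsmul k x).symm
      _ = ((k • (m • a) : ℝ) : Real.Angle) := by rw [hm]
      _ = ((m • (k • a) : ℝ) : Real.Angle) := by rw [smul_comm]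
      _ = ((m • (2 * Real.pi) : ℝ) : Real.Angle) := by rw [hk]
      _ = m • ((2 * Real.pi : ℝ) : Real.Angle) := Real.Angle.coe_zsmul m _
      _ = m • (0 : Real.Angle) := by rw [Real.Angle.coe_two_pi]
      _ = 0 := smul_zero m

end Helpers

/-- **Lemma 3.2 (invariant case).** If an open subset `A` of `S²` is invariant under a rotation
`ρ` of infinite order about an axis `ℓ`, then `A` is invariant under every rotation about `ℓ`. -/
theorem stmt_6 (A : Set S2) (hA : IsOpen A)
    (ρ : E3 ≃ₗᵢ[ℝ] E3) (hρrot : IsRotation ρ)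
    (ℓ : Submodule ℝ E3) (hline : IsLine ℓ) (haxis : FixesAxis ρ ℓ)
    (hord : ¬ IsOfFinOrder ρ)
    (hinv : sphereMap ρ '' A = A) :
    ∀ τ : E3 ≃ₗᵢ[ℝ] E3, IsRotation τ → FixesAxis τ ℓ → sphereMap τ '' A = A := by
  classical
  intro τ hτrot hτaxis
  have h3 : Module.finrank ℝ E3 = 3 := finrank_euclideanSpace_fin
  have hcompl : IsCompl ℓ ℓᗮ := Submodule.isCompl_orthogonal_of_hasOrthogonalProjection
  have h2 : Module.finrank ℝ ℓᗮ = 2 := by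
    have := Submodule.finrank_add_finrank_orthogonal (K := ℓ)
    rw [hline, h3] at this
    omega
  haveI : Fact (Module.finrank ℝ ℓᗮ = 2) := ⟨h2⟩
  set o : Orientation ℝ ℓᗮ (Fin 2) := (Module.finBasisOfFinrankEq ℝ ℓᗮ h2).orientation with ho
  obtain ⟨θ, hθ⟩ : ∃ θ, restr ρ haxis = o.rotation θ :=
    o.exists_linearIsometryEquiv_eq_of_det_pos
      (by rw [det_restr hline haxis, hρrot]; norm_num)
  have hρ1 : ∀ w : ℓᗮ, ρ (w : E3) = ((o.rotation θ w : ℓᗮ) : E3) := by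
    intro w; rw [restr_apply haxis w, hθ]
  have hρinv : ∀ w : ℓᗮ, ρ⁻¹ (w : E3) = ((o.rotation (-θ) w : ℓᗮ) : E3) := by
    intro w
    have h := hρ1 (o.rotation (-θ) w)
    rw [Orientation.rotation_rotation, add_neg_cancel, Orientation.rotation_zero,
      LinearIsometryEquiv.coe_refl, id_eq] at h
    calc ρ⁻¹ (w : E3) = ρ⁻¹ (ρ ((o.rotation (-θ) w : ℓᗮ) : E3)) := by rw [h]
      _ = ((o.rotation (-θ) w : ℓᗮ) : E3) := ρ.symm_apply_apply _
  have hρpow : ∀ n : ℤ, ∀ w : ℓᗮ, (ρ ^ n) (w : E3) = ((o.rotation (n • θ) w : ℓᗮ) : E3) := by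
    intro n
    induction n using Int.induction_on with
    | zero =>
      intro w
      rw [zpow_zero, zero_zsmul, Orientation.rotation_zero]
      rfl
    | succ n ih =>
      intro w
      have hstep : (ρ ^ ((n : ℤ) + 1)) (w : E3) = (ρ ^ (n : ℤ)) (ρ (w : E3)) := by
        rw [zpow_add_one]; rfl
      rw [hstep, hρ1 w, ih (o.rotation θ w), Orientation.rotation_rotation,
        show ((n : ℤ) + 1) • θ = (n : ℤ) • θ + θ from by rw [add_zsmul, one_zsmul]]
    | pred n ih =>
      intro w
      have hstep : (ρ ^ ((-n : ℤ) - 1)) (w : E3) = (ρ ^ (-n : ℤ)) (ρ⁻¹ (w : E3)) := by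
        rw [zpow_sub_one]; rfl
      rw [hstep, hρinv w, ih (o.rotation (-θ) w), Orientation.rotation_rotation,
        show ((-n : ℤ) - 1) • θ = (-n : ℤ) • θ + -θ from by
          rw [sub_zsmul, one_zsmul]]
  have hρaxis : ∀ n : ℤ, FixesAxis (ρ ^ n) ℓ := by
    intro n
    induction n using Int.induction_on with
    | zero => intro v hv; rfl
    | succ n ih =>
      intro v hv
      have hstep : (ρ ^ ((n : ℤ) + 1)) v = (ρ ^ (n : ℤ)) (ρ v) := by rw [zpow_add_one]; rfl
      rw [hstep, haxis v hv]; exact ih v hv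
    | pred n ih =>
      intro v hv
      have hstep : (ρ ^ ((-n : ℤ) - 1)) v = (ρ ^ (-n : ℤ)) (ρ⁻¹ v) := by
        rw [zpow_sub_one]; rfl
      have h1 : ρ⁻¹ v = v := (fixesAxis_symm haxis) v hv
      rw [hstep, h1]; exact ih v hv
  have happly : ∀ (f : E3 ≃ₗᵢ[ℝ] E3), FixesAxis f ℓ → ∀ v ∈ ℓ, ∀ w : ℓᗮ,
      f (v + (w : E3)) = v + f (w : E3) := by
    intro f hf v hv w
    rw [map_add, hf v hv]
  have hθne : ∀ n : ℤ, n ≠ 0 → n • θ ≠ 0 := by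
    intro n hn h0
    apply hord
    have hone : ρ ^ n = 1 := by
      apply LinearIsometryEquiv.ext
      intro u
      have hu : u ∈ ℓ ⊔ ℓᗮ := by rw [hcompl.codisjoint.eq_top]; exact Submodule.mem_top
      obtain ⟨v, hv, w, hw, rfl⟩ := Submodule.mem_sup.1 hu
      show (ρ ^ n) (v + w) = v + w
      calc (ρ ^ n) (v + w) = v + (ρ ^ n) ((⟨w, hw⟩ : ℓᗮ) : E3) :=
            happly _ (hρaxis n) v hv ⟨w, hw⟩
        _ = v + ((o.rotation (n • θ) ⟨w, hw⟩ : ℓᗮ) : E3) := by rw [hρpow n ⟨w, hw⟩]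
        _ = v + w := by rw [h0, Orientation.rotation_zero]; rfl
    rw [isOfFinOrder_iff_pow_eq_one]
    refine ⟨n.natAbs, Int.natAbs_pos.2 hn, ?_⟩
    rcases Int.natAbs_eq n with h | h
    · rw [← zpow_natCast, ← h, hone]
    · rw [← zpow_natCast, show ((n.natAbs : ℕ) : ℤ) = -n from by omega, zpow_neg, hone, inv_one]
  have hιnv : ∀ n : ℤ, sphereMap (ρ ^ n) '' A = A := by
    have hid : ∀ x : S2, sphereMap ρ⁻¹ (sphereMap ρ x) = x := fun x =>
      Subtype.ext (ρ.symm_apply_apply x.1)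
    have hsymm : sphereMap ρ⁻¹ '' A = A := by
      conv_lhs => rw [← hinv]
      have hco : sphereMap ρ⁻¹ ∘ sphereMap ρ = id := funext hid
      rw [← Set.image_comp, hco, Set.image_id]
    intro n
    induction n using Int.induction_on with
    | zero =>
      have h1 : sphereMap (ρ ^ (0 : ℤ)) = id := funext fun x => Subtype.ext rfl
      rw [h1, Set.image_id]
    | succ n ih =>
      have hc : sphereMap (ρ ^ ((n : ℤ) + 1)) = sphereMap (ρ ^ (n : ℤ)) ∘ sphereMap ρ := by
        rw [zpow_add_one]; rfl
      rw [hc, Set.image_comp, hinv, ih]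
    | pred n ih =>
      have hc : sphereMap (ρ ^ ((-n : ℤ) - 1)) = sphereMap (ρ ^ (-n : ℤ)) ∘ sphereMap ρ⁻¹ := by
        rw [zpow_sub_one]; rfl
      rw [hc, Set.image_comp, hsymm, ih]
  have hsub : ∀ σ : E3 ≃ₗᵢ[ℝ] E3, IsRotation σ → FixesAxis σ ℓ → sphereMap σ '' A ⊆ A := by
    intro σ hσrot hσaxis
    obtain ⟨φ, hφ⟩ : ∃ φ, restr σ hσaxis = o.rotation φ :=
      o.exists_linearIsometryEquiv_eq_of_det_pos
        (by rw [det_restr hline hσaxis, hσrot]; norm_num)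
    have hσw : ∀ w : ℓᗮ, σ (w : E3) = ((o.rotation φ w : ℓᗮ) : E3) := by
      intro w; rw [restr_apply hσaxis w, hφ]
    rintro _ ⟨x, hxA, rfl⟩
    have hx1 : (x : E3) ∈ ℓ ⊔ ℓᗮ := by rw [hcompl.codisjoint.eq_top]; exact Submodule.mem_top
    obtain ⟨v, hv, w, hw, hvw⟩ := Submodule.mem_sup.1 hx1
    set w' : (ℓᗮ : Submodule ℝ E3) := ⟨w, hw⟩ with hw'
    have hvw' : v + (w' : E3) = (x : E3) := hvw
    set F : Real.Angle → E3 :=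
      fun ψ => v + (ψ.cos • (w' : E3) + ψ.sin • ((o.rightAngleRotation w' : ℓᗮ) : E3)) with hF
    have hFrot : ∀ ψ : Real.Angle, v + ((o.rotation ψ w' : ℓᗮ) : E3) = F ψ := by
      intro ψ
      simp only [hF, Orientation.rotation_apply]
      rfl
    have hFcont : Continuous F :=
      continuous_const.add ((Real.Angle.continuous_cos.smul continuous_const).add
        (Real.Angle.continuous_sin.smul continuous_const))
    have hF0 : F 0 = (x : E3) := by
      rw [← hFrot 0, Orientation.rotation_zero]
      exact hvw'
    rw [Metric.isOpen_iff] at hA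
    obtain ⟨ε, hε, hball⟩ := hA x hxA
    have hUopen : IsOpen {ψ : Real.Angle | dist (F (φ - ψ)) (x : E3) < ε} := by
      have hc : Continuous fun ψ : Real.Angle => dist (F (φ - ψ)) (x : E3) :=
        (hFcont.comp (continuous_const.sub continuous_id)).dist continuous_const
      exact isOpen_lt hc continuous_const
    have hUne : φ ∈ {ψ : Real.Angle | dist (F (φ - ψ)) (x : E3) < ε} := by
      simp only [Set.mem_setOf_eq, sub_self, hF0, dist_self]
      exact hε
    obtain ⟨ψ, hψrange, hψU⟩ :=
      (dense_zmultiples_angle θ hθne).exists_mem_open hUopen ⟨φ, hUne⟩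
    obtain ⟨n, rfl⟩ := hψrange
    set z : S2 := sphereMap (ρ ^ (-n)) (sphereMap σ x) with hz
    have hz1 : (z : E3) = F (φ - n • θ) := by
      show (ρ ^ (-n)) (σ (x : E3)) = F (φ - n • θ)
      rw [← hvw']
      calc (ρ ^ (-n)) (σ (v + (w' : E3)))
          = (ρ ^ (-n)) (v + σ (w' : E3)) := by rw [happly σ hσaxis v hv w']
        _ = (ρ ^ (-n)) (v + ((o.rotation φ w' : ℓᗮ) : E3)) := by rw [hσw w']
        _ = v + (ρ ^ (-n)) ((o.rotation φ w' : ℓᗮ) : E3) :=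
            happly _ (hρaxis (-n)) v hv _
        _ = v + ((o.rotation ((-n) • θ) (o.rotation φ w') : ℓᗮ) : E3) := by
            rw [hρpow (-n) (o.rotation φ w')]
        _ = v + ((o.rotation (φ - n • θ) w' : ℓᗮ) : E3) := by
            rw [Orientation.rotation_rotation, neg_zsmul, neg_add_eq_sub]
        _ = F (φ - n • θ) := hFrot _
    have hzball : z ∈ Metric.ball x ε := by
      rw [Metric.mem_ball, Subtype.dist_eq, hz1]
      exact hψU
    have hzA : z ∈ A := hball hzball
    have hfinal : sphereMap (ρ ^ n) z = sphereMap σ x := by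
      apply Subtype.ext
      show (ρ ^ n) ((ρ ^ (-n)) (σ (x : E3))) = σ (x : E3)
      rw [zpow_neg]
      exact (ρ ^ n).apply_symm_apply _
    rw [← hfinal, ← hιnv n]
    exact Set.mem_image_of_mem _ hzA
  have hτsymm_rot : IsRotation τ.symm := by
    have hcomp : (τ.toLinearEquiv : E3 →ₗ[ℝ] E3) ∘ₗ (τ.symm.toLinearEquiv : E3 →ₗ[ℝ] E3) =
        LinearMap.id := by
      apply LinearMap.ext; intro u; simp
    have hd := congrArg LinearMap.det hcomp
    rw [LinearMap.det_comp, hτrot, one_mul, LinearMap.det_id] at hd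
    exact hd
  apply Set.Subset.antisymm (hsub τ hτrot hτaxis)
  intro a ha
  refine ⟨sphereMap τ.symm a, hsub τ.symm hτsymm_rot (fixesAxis_symm hτaxis) ⟨a, ha, rfl⟩, ?_⟩
  exact Subtype.ext (τ.apply_symm_apply a.1)
end

section
/- Let G be a group of rotations of S² which is free as an abstract group. If a system of m congruences (L_i, R_i), 1 ≤ i ≤ m, on {1,…,r} has a quasi-solution in S² consisting of open sets, with all witnessing maps belonging to G, then the system is weak. -/
open Set

/-- Congruences deducible from a set of congruence pairs on `{1,…,r}` (encoded as `Fin r`):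
closure under symmetry, complementation and transitivity. -/
inductive CongDed {r : ℕ} (S : Set (Set (Fin r) × Set (Fin r))) :
    Set (Fin r) → Set (Fin r) → Prop
  | base {A B : Set (Fin r)} : (A, B) ∈ S → CongDed S A B
  | symm {A B : Set (Fin r)} : CongDed S A B → CongDed S B A
  | compl {A B : Set (Fin r)} : CongDed S A B → CongDed S Aᶜ Bᶜ
  | trans {A B C : Set (Fin r)} : CongDed S A B → CongDed S B C → CongDed S A C

/-- The system of congruences `(L i, R i)` is weak: no congruence between a set and its
complement is deducible from it. -/
def SysWeak {r m : ℕ} (L R : Fin m → Set (Fin r)) : Prop :=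
  ∀ A : Set (Fin r), ¬ CongDed {p | ∃ i, p = (L i, R i)} A Aᶜ

/-- The system is nonredundant: no congruence of the system is deducible from the system with
that congruence removed, and there is no identity congruence. -/
def SysNonredundant {r m : ℕ} (L R : Fin m → Set (Fin r)) : Prop :=
  (∀ i, ¬ CongDed {p | ∃ j, j ≠ i ∧ p = (L j, R j)} (L i) (R i)) ∧ ∀ i, L i ≠ R i

/-- Subcongruences deducible from the system. -/
inductive SubCong {r m : ℕ} (L R : Fin m → Set (Fin r)) :
    Set (Fin r) → Set (Fin r) → Prop
  | subset {A B : Set (Fin r)} : A ⊆ B → SubCong L R A B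
  | trans {A B C : Set (Fin r)} : SubCong L R A B → SubCong L R B C → SubCong L R A C
  | lr (i : Fin m) : SubCong L R (L i) (R i)
  | rl (i : Fin m) : SubCong L R (R i) (L i)
  | lrc (i : Fin m) : SubCong L R (L i)ᶜ (R i)ᶜ
  | rlc (i : Fin m) : SubCong L R (R i)ᶜ (L i)ᶜ

/-- The system is consistent: there is no deducible subcongruence `L ⪯ R` with `R` a proper
subset of `L`. -/
def SysConsistent {r m : ℕ} (L R : Fin m → Set (Fin r)) : Prop :=
  ∀ A B : Set (Fin r), SubCong L R A B → ¬ B ⊂ A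

/-- All congruences of the system are proper. -/
def SysProper {r m : ℕ} (L R : Fin m → Set (Fin r)) : Prop :=
  ∀ i, (L i).Nonempty ∧ L i ≠ univ ∧ (R i).Nonempty ∧ R i ≠ univ
section Helpers

open Set Complex Module

/-! ### Torsion-freeness of free groups -/

theorem freeGroup_tf {G : Type*} [Group G] (hG : IsFreeGroup G) {x : G} (hx : x ≠ 1)
    {n : ℕ} (hn : n ≠ 0) : x ^ n ≠ 1 := by
  intro h
  have hfin : IsOfFinOrder x := isOfFinOrder_iff_pow_eq_one.2 ⟨n, Nat.pos_of_ne_zero hn, h⟩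
  set H : Subgroup G := Subgroup.zpowers x with hH
  haveI : IsFreeGroup H := by infer_instance
  haveI : Finite H := Set.Finite.to_subtype hfin.finite_zpowers
  set ι := IsFreeGroup.Generators H
  have e : H ≃* FreeGroup ι := IsFreeGroup.toFreeGroup H
  haveI : Finite (FreeGroup ι) := Finite.of_equiv H e.toEquiv
  haveI : IsEmpty ι := by
    by_contra hne
    rw [not_isEmpty_iff] at hne
    obtain ⟨a⟩ := hne
    classical
    have hinj : Function.Injective (fun k : ℕ => FreeGroup.of a ^ k) := by
      intro i j hij
      have := congrArg FreeGroup.toWord hij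
      simp only [FreeGroup.toWord_of_pow] at this
      simpa using congrArg List.length this
    exact (Finite.of_injective _ hinj).false.elim
  have halltriv : ∀ z : FreeGroup ι, z = 1 := by
    intro z
    rw [← FreeGroup.toWord_eq_nil_iff]
    cases hz : z.toWord with
    | nil => rfl
    | cons a _ => exact (IsEmpty.elim ‹IsEmpty ι› a.1)
  have hx1 : (⟨x, Subgroup.mem_zpowers x⟩ : H) = 1 := by
    apply e.injective
    rw [map_one]
    exact halltriv _
  exact hx (by simpa using congrArg Subtype.val hx1)

/-! ### Topological helpers -/

variable {X : Type*} [TopologicalSpace X]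

lemma myIsMeagre_union {s t : Set X} (hs : IsMeagre s) (ht : IsMeagre t) :
    IsMeagre (s ∪ t) := by
  rw [IsMeagre, compl_union]; exact Filter.inter_mem hs ht

lemma myIsMeagre_iUnion {ι : Sort*} [Countable ι] {f : ι → Set X}
    (h : ∀ i, IsMeagre (f i)) : IsMeagre (⋃ i, f i) := by
  rw [IsMeagre, compl_iUnion]
  exact countable_iInter_mem.2 h

lemma myIsMeagre_image (e : X ≃ₜ X) {s : Set X} (h : IsMeagre s) : IsMeagre (e '' s) := by
  rw [← Homeomorph.preimage_symm]
  exact h.preimage_of_isOpenMap e.symm.continuous e.symm.isOpenMap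

lemma myImage_symmDiff (e : X ≃ₜ X) (s t : Set X) :
    e '' (symmDiff s t) = symmDiff (e '' s) (e '' t) := by
  rw [Set.symmDiff_def, Set.symmDiff_def, Set.image_union,
    Set.image_diff e.injective, Set.image_diff e.injective]

lemma myOpen_meagre_empty [BaireSpace X] {s : Set X} (ho : IsOpen s) (hm : IsMeagre s) :
    s = ∅ := by
  by_contra h
  obtain ⟨x, hx, hx'⟩ := (dense_of_mem_residual hm).exists_mem_open ho
    (Set.nonempty_iff_ne_empty.2 h)
  exact hx hx'

lemma myClosure_eq_of_meagre_symmDiff [BaireSpace X] {U V : Set X} (hU : IsOpen U)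
    (hV : IsOpen V) (h : IsMeagre (symmDiff U V)) : closure U = closure V := by
  have key : ∀ (A B : Set X), IsOpen A → IsMeagre (A \ B) → A ⊆ closure B := by
    intro A B hA hm
    have h1 : A \ closure B = ∅ := by
      apply myOpen_meagre_empty (hA.sdiff isClosed_closure)
      exact hm.mono (Set.diff_subset_diff_right subset_closure)
    intro x hx
    by_contra hc
    exact (Set.eq_empty_iff_forall_notMem.1 h1 x) ⟨hx, hc⟩
  have h1 : U ⊆ closure V :=
    key U V hU (h.mono (by rw [Set.symmDiff_def]; exact Set.subset_union_left))
  have h2 : V ⊆ closure U :=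
    key V U hV (h.mono (by rw [Set.symmDiff_def]; exact Set.subset_union_right))
  exact subset_antisymm (closure_minimal h1 isClosed_closure)
    (closure_minimal h2 isClosed_closure)

lemma myDisjoint_closure {U V : Set X} (hV : IsOpen V) (h : U ∩ V = ∅) :
    closure U ∩ V = ∅ := by
  have h2 := hV.inter_closure (t := U)
  rw [Set.inter_comm U V] at h
  rw [h, closure_empty] at h2
  rw [Set.inter_comm]
  exact Set.subset_empty_iff.1 h2

/-! ### Geometry: Euler's rotation theorem, and density of orbits -/

noncomputable section Geom

local notation "⟪" x ", " y "⟫" => @inner ℝ _ _ (x : E3) (y : E3)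

open Matrix in
lemma euler_exists (σ : E3 ≃ₗᵢ[ℝ] E3)
    (hdet : LinearMap.det (σ.toLinearEquiv : E3 →ₗ[ℝ] E3) = 1) :
    ∃ v : E3, ‖v‖ = 1 ∧ σ v = v := by
  classical
  set b := stdOrthonormalBasis ℝ E3 with hb
  have hcard : Fintype.card (Fin (Module.finrank ℝ E3)) = 3 := by
    simp [finrank_euclideanSpace_fin]
  set M := LinearMap.toMatrix b.toBasis b.toBasis (σ.toLinearEquiv : E3 →ₗ[ℝ] E3) with hM
  have hMdet : M.det = 1 := by
    rw [hM, LinearMap.det_toMatrix]; exact hdet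
  have hMTM : Mᵀ * M = 1 := by
    ext i j
    have hMe : ∀ k l, M k l = ⟪b k, σ (b l)⟫ := by
      intro k l
      rw [hM, LinearMap.toMatrix_apply]
      exact b.repr_apply_apply _ k
    have h5 : (Mᵀ * M) i j = ∑ k, ⟪σ (b i), b k⟫ * ⟪b k, σ (b j)⟫ := by
      rw [Matrix.mul_apply]
      congr 1; ext k
      rw [Matrix.transpose_apply, hMe, hMe]
      rw [real_inner_comm (b k) (σ (b i))]
    rw [h5, b.sum_inner_mul_inner, σ.inner_map_map]
    rw [orthonormal_iff_ite.1 b.orthonormal i j, Matrix.one_apply]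
  have hdet0 : (M - 1).det = 0 := by
    have h1 : (M - 1)ᵀ = Mᵀ * (1 - M) := by
      rw [Matrix.mul_sub, Matrix.mul_one, hMTM, Matrix.transpose_sub, Matrix.transpose_one]
    have h2 : (M - 1).det = (1 - M).det := by
      rw [← Matrix.det_transpose (M - 1), h1, Matrix.det_mul, Matrix.det_transpose, hMdet,
        one_mul]
    have h3 : (1 - M) = -(M - 1) := (neg_sub M 1).symm
    rw [h3, Matrix.det_neg, hcard] at h2
    have h4 : (M - 1).det = -(M - 1).det := by
      nth_rewrite 1 [h2]; ring
    linarith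
  obtain ⟨y, hy0, hy⟩ := (Matrix.exists_mulVec_eq_zero_iff).2 hdet0
  set x : E3 := b.toBasis.equivFun.symm y with hx
  have hrepr : ⇑(b.toBasis.repr x) = y := by
    ext i
    rw [hx]
    simp [Basis.equivFun_symm_apply, LinearIsometryEquiv.apply_symm_apply]
  have hxfix : σ x = x := by
    have h1 : M *ᵥ ⇑(b.toBasis.repr x) = ⇑(b.toBasis.repr (σ x)) :=
      LinearMap.toMatrix_mulVec_repr _ _ _ _
    have h2 : M *ᵥ y = y := by
      have h6 : (M - 1) *ᵥ y = M *ᵥ y - y := by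
        rw [Matrix.sub_mulVec, Matrix.one_mulVec]
      rw [h6] at hy
      exact sub_eq_zero.1 hy
    have h3 : ⇑(b.toBasis.repr (σ x)) = ⇑(b.toBasis.repr x) := by
      rw [← h1, hrepr, h2]
    have h4 : b.toBasis.repr (σ x) = b.toBasis.repr x := by
      ext i; exact congrFun h3 i
    exact b.toBasis.repr.injective h4
  have hxne : x ≠ 0 := by
    intro h
    apply hy0
    rw [← hrepr, h]
    simp
  refine ⟨‖x‖⁻¹ • x, norm_smul_inv_norm hxne, ?_⟩
  rw [σ.map_smul, hxfix]

set_option maxHeartbeats 1000000 in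
lemma circle_dense (a : Circle) (ha : ∀ k : ℕ, k ≠ 0 → a ^ k ≠ 1) :
    (a : ℂ) ∈ closure {w : ℂ | ∃ n : ℤ, (a : ℂ) ^ (2 * n) = w} := by
  have hθ : ∃ θ : ℝ, (a : ℂ) = Complex.exp (θ * I) :=
    ⟨Complex.arg (a : ℂ), by rw [← Circle.coe_exp, Circle.exp_arg]⟩
  obtain ⟨θ, hcexp⟩ := hθ
  have hpow : ∀ n : ℤ, (a : ℂ) ^ n = Complex.exp ((n : ℂ) * (θ * I)) := by
    intro n
    rw [hcexp, ← Complex.exp_int_mul]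
  have hexp1 : ∀ q : ℤ, Complex.exp ((q : ℂ) * (2 * Real.pi * I)) = 1 := by
    intro q
    rw [Complex.exp_int_mul, Complex.exp_two_pi_mul_I, one_zpow]
  rcases (AddSubgroup.closure {2 * θ, 2 * Real.pi}).dense_or_cyclic with hdense | ⟨c, hc⟩
  · have hθS : θ ∈ closure ((AddSubgroup.closure {2 * θ, 2 * Real.pi} : AddSubgroup ℝ) :
        Set ℝ) := hdense θ
    have hfc : Continuous (fun t : ℝ => Complex.exp (t * I)) := by fun_prop
    have himg : (fun t : ℝ => Complex.exp (t * I)) ''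
        ((AddSubgroup.closure {2 * θ, 2 * Real.pi} : AddSubgroup ℝ) : Set ℝ) ⊆
        {w : ℂ | ∃ n : ℤ, (a : ℂ) ^ (2 * n) = w} := by
      rintro - ⟨s, hs, rfl⟩
      rw [SetLike.mem_coe, AddSubgroup.mem_closure_pair] at hs
      obtain ⟨p, q, rfl⟩ := hs
      refine ⟨p, ?_⟩
      rw [hpow]
      rw [show (((2 : ℤ) * p : ℤ) : ℂ) * (θ * I) = ((p : ℝ) * (2 * θ) : ℝ) * I by
        push_cast; ring]
      show _ = Complex.exp (((p : ℤ) • (2 * θ) + (q : ℤ) • (2 * Real.pi) : ℝ) * I)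
      rw [show (((p : ℤ) • (2 * θ) + (q : ℤ) • (2 * Real.pi) : ℝ) : ℂ) * I
          = ((p : ℝ) * (2 * θ) : ℝ) * I + (q : ℂ) * (2 * Real.pi * I) by
        rw [zsmul_eq_mul, zsmul_eq_mul]; push_cast; ring]
      rw [Complex.exp_add, hexp1, mul_one]
    have h3 : (a : ℂ) ∈ (fun t : ℝ => Complex.exp (t * I)) '' closure
        ((AddSubgroup.closure {2 * θ, 2 * Real.pi} : AddSubgroup ℝ) : Set ℝ) :=
      ⟨θ, hθS, hcexp.symm⟩
    exact closure_mono himg (image_closure_subset_closure_image hfc h3)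
  · exfalso
    have h2θ : (2 * θ) ∈ AddSubgroup.closure ({2 * θ, 2 * Real.pi} : Set ℝ) :=
      AddSubgroup.subset_closure (by simp)
    have h2π : (2 * Real.pi) ∈ AddSubgroup.closure ({2 * θ, 2 * Real.pi} : Set ℝ) :=
      AddSubgroup.subset_closure (by simp)
    rw [hc, AddSubgroup.mem_closure_singleton] at h2θ h2π
    obtain ⟨p, hp⟩ := h2θ
    obtain ⟨q, hq⟩ := h2π
    rw [zsmul_eq_mul] at hp hq
    have hq0 : q ≠ 0 := by
      rintro rfl
      have := Real.pi_pos
      simp at hq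
    have key : (a : ℂ) ^ (2 * q) = 1 := by
      rw [hpow]
      rw [show (((2 : ℤ) * q : ℤ) : ℂ) * (θ * I) = ((q : ℝ) * (2 * θ) : ℝ) * I by
        push_cast; ring]
      have hr : (q : ℝ) * (2 * θ) = (p : ℝ) * (2 * Real.pi) := by
        rw [← hp, ← hq]; ring
      rw [hr]
      rw [show (((p : ℝ) * (2 * Real.pi) : ℝ) : ℂ) * I = (p : ℂ) * (2 * Real.pi * I) by
        push_cast; ring]
      exact hexp1 p
    have hfin : IsOfFinOrder a := by
      rw [isOfFinOrder_iff_zpow_eq_one]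
      refine ⟨2 * q, by simpa using hq0, ?_⟩
      have h12 : ((a ^ (2 * q) : Circle) : ℂ) = ((1 : Circle) : ℂ) := by
        push_cast
        exact key
      exact Subtype.ext (by exact_mod_cast h12)
    obtain ⟨k, hk0, hk⟩ := isOfFinOrder_iff_pow_eq_one.1 hfin
    exact ha k (Nat.pos_iff_ne_zero.1 hk0) hk

set_option maxHeartbeats 1000000 in
lemma key_geom (σ : E3 ≃ₗᵢ[ℝ] E3)
    (hdet : LinearMap.det (σ.toLinearEquiv : E3 →ₗ[ℝ] E3) = 1)
    (htf : ∀ n : ℕ, n ≠ 0 → σ ^ n ≠ 1) (x : E3) :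
    σ x ∈ closure (Set.range fun n : ℤ => (σ ^ (2 * n)) x) := by
  classical
  obtain ⟨v, hv1, hvfix⟩ := euler_exists σ hdet
  have hvne : v ≠ 0 := by intro h; rw [h, norm_zero] at hv1; exact zero_ne_one hv1
  set K : Submodule ℝ E3 := (ℝ ∙ v)ᗮ with hK
  have hvv : ⟪v, v⟫ = 1 := by
    rw [real_inner_self_eq_norm_mul_norm, hv1, mul_one]
  have hσfix' : σ.symm v = v := by
    conv_lhs => rw [← hvfix]
    exact σ.symm_apply_apply v
  have hσK : ∀ u : E3, u ∈ K → σ u ∈ K := by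
    intro u hu
    rw [hK, Submodule.mem_orthogonal_singleton_iff_inner_right] at hu ⊢
    calc ⟪v, σ u⟫ = ⟪σ v, σ u⟫ := by rw [hvfix]
      _ = ⟪v, u⟫ := σ.inner_map_map v u
      _ = 0 := hu
  have hσK' : ∀ u : E3, u ∈ K → σ.symm u ∈ K := by
    intro u hu
    rw [hK, Submodule.mem_orthogonal_singleton_iff_inner_right] at hu ⊢
    calc ⟪v, σ.symm u⟫ = ⟪σ.symm v, σ.symm u⟫ := by rw [hσfix']
      _ = ⟪v, u⟫ := σ.symm.inner_map_map v u
      _ = 0 := hu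
  let τlin : K →ₗ[ℝ] K := (σ.toLinearEquiv : E3 →ₗ[ℝ] E3).restrict hσK
  let τlin' : K →ₗ[ℝ] K := (σ.symm.toLinearEquiv : E3 →ₗ[ℝ] E3).restrict hσK'
  let τeqv : K ≃ₗ[ℝ] K := LinearEquiv.ofLinear τlin τlin'
    (LinearMap.ext fun u => Subtype.ext (σ.apply_symm_apply u))
    (LinearMap.ext fun u => Subtype.ext (σ.symm_apply_apply u))
  let τ : K ≃ₗᵢ[ℝ] K := ⟨τeqv, fun u => σ.norm_map u⟩
  have hτcoe : ∀ u : K, (↑(τ u) : E3) = σ ↑u := fun _ => rfl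
  haveI : Fact (finrank ℝ E3 = 2 + 1) := ⟨by simp [finrank_euclideanSpace_fin]⟩
  have hfr : finrank ℝ K = 2 := Submodule.finrank_orthogonal_span_singleton hvne
  let φ : K ≃ₗᵢ[ℝ] ℂ :=
    ((stdOrthonormalBasis ℝ K).reindex (finCongr hfr)).repr.trans
      Complex.orthonormalBasisOneI.repr.symm
  let B : ℂ ≃ₗᵢ[ℝ] ℂ := (φ.symm.trans τ).trans φ
  have hτφ : ∀ u : K, φ (τ u) = B (φ u) := by
    intro u
    simp only [B, LinearIsometryEquiv.trans_apply, LinearIsometryEquiv.symm_apply_apply]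
  have hdec : ∀ w : E3, ∃ (c : ℝ) (u : K), w = c • v + ↑u := by
    intro w
    refine ⟨⟪v, w⟫, ⟨w - ⟪v, w⟫ • v, ?_⟩, by module⟩
    rw [hK, Submodule.mem_orthogonal_singleton_iff_inner_right]
    rw [inner_sub_right, real_inner_smul_right, hvv]
    ring
  have hvpow : ∀ n : ℕ, (σ ^ n) v = v := by
    intro n
    induction n with
    | zero => simp
    | succ k ih => rw [pow_succ, LinearIsometryEquiv.coe_mul, Function.comp_apply, hvfix, ih]
  have hτpow : ∀ (n : ℕ) (u : K), ((τ ^ n) u : E3) = (σ ^ n) ↑u := by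
    intro n
    induction n with
    | zero => intro u; simp
    | succ k ih =>
      intro u
      rw [pow_succ, pow_succ, LinearIsometryEquiv.coe_mul, LinearIsometryEquiv.coe_mul]
      simp only [Function.comp_apply]
      rw [ih (τ u), hτcoe]
  have hvinv : σ⁻¹ v = v := by
    have h1 : (σ⁻¹ * σ) v = v := by rw [inv_mul_cancel]; rfl
    rw [LinearIsometryEquiv.coe_mul, Function.comp_apply, hvfix] at h1
    exact h1
  have hvzpow : ∀ n : ℤ, (σ ^ n) v = v := by
    intro n
    induction n using Int.induction_on with
    | zero => simp
    | succ k ih =>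
      rw [zpow_add_one, LinearIsometryEquiv.coe_mul, Function.comp_apply, hvfix, ih]
    | pred k ih =>
      rw [zpow_sub_one, LinearIsometryEquiv.coe_mul, Function.comp_apply, hvinv, ih]
  have hτinvcoe : ∀ u : K, (↑(τ⁻¹ u) : E3) = σ⁻¹ ↑u := by
    intro u
    have h1 : τ (τ⁻¹ u) = u := by
      have h0 : (τ * τ⁻¹) u = u := by rw [mul_inv_cancel]; rfl
      rwa [LinearIsometryEquiv.coe_mul, Function.comp_apply] at h0
    have h2 : σ ↑(τ⁻¹ u) = (↑u : E3) := by rw [← hτcoe, h1]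
    have h3 : σ⁻¹ (σ ↑(τ⁻¹ u)) = (↑(τ⁻¹ u) : E3) := by
      have h0 : (σ⁻¹ * σ) ↑(τ⁻¹ u) = (↑(τ⁻¹ u) : E3) := by rw [inv_mul_cancel]; rfl
      rwa [LinearIsometryEquiv.coe_mul, Function.comp_apply] at h0
    rw [← h3, h2]
  have hτzpow : ∀ (n : ℤ) (u : K), ((τ ^ n) u : E3) = (σ ^ n) ↑u := by
    intro n
    induction n using Int.induction_on with
    | zero => intro u; simp
    | succ k ih =>
      intro u
      rw [zpow_add_one, zpow_add_one, LinearIsometryEquiv.coe_mul,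
        LinearIsometryEquiv.coe_mul]
      simp only [Function.comp_apply]
      rw [ih (τ u), hτcoe]
    | pred k ih =>
      intro u
      rw [zpow_sub_one, zpow_sub_one, LinearIsometryEquiv.coe_mul,
        LinearIsometryEquiv.coe_mul]
      simp only [Function.comp_apply]
      rw [ih (τ⁻¹ u), hτinvcoe]
  have hdecz : ∀ (n : ℤ) (c : ℝ) (u : K), (σ ^ n) (c • v + ↑u) = c • v + ↑((τ ^ n) u) := by
    intro n c u
    rw [map_add, LinearIsometryEquiv.map_smul, hvzpow, hτzpow]
  obtain ⟨a, ha | ha⟩ := linear_isometry_complex B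
  · have haB : ∀ z : ℂ, B z = a * z := fun z => by rw [ha, rotation_apply]
    have hane : (a : ℂ) ≠ 0 := Circle.coe_ne_zero a
    have hτinvφ : ∀ u : K, φ (τ⁻¹ u) = (a : ℂ)⁻¹ * φ u := by
      intro u
      have h1 : τ (τ⁻¹ u) = u := by
        have h0 : (τ * τ⁻¹) u = u := by rw [mul_inv_cancel]; rfl
        rwa [LinearIsometryEquiv.coe_mul, Function.comp_apply] at h0
      have h2 : φ u = a * φ (τ⁻¹ u) := by
        conv_lhs => rw [← h1, hτφ, haB]
      rw [h2]
      field_simp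
    have hτzφ : ∀ (n : ℤ) (u : K), φ ((τ ^ n) u) = (a : ℂ) ^ n * φ u := by
      intro n
      induction n using Int.induction_on with
      | zero => intro u; simp
      | succ k ih =>
        intro u
        rw [zpow_add_one, LinearIsometryEquiv.coe_mul, Function.comp_apply, ih (τ u),
          hτφ, haB, zpow_add_one₀ hane]
        ring
      | pred k ih =>
        intro u
        rw [zpow_sub_one, LinearIsometryEquiv.coe_mul, Function.comp_apply, ih (τ⁻¹ u),
          hτinvφ, zpow_sub_one₀ hane]
        ring
    have hroot : ∀ k : ℕ, k ≠ 0 → a ^ k ≠ 1 := by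
      intro k hk hak
      apply htf k hk
      have hτφn : ∀ u : K, φ ((τ ^ (k : ℤ)) u) = φ u := by
        intro u
        rw [hτzφ]
        have h10 : (a : ℂ) ^ k = 1 := by
          have h11 := congrArg (fun z : Circle => (z : ℂ)) hak
          simp only [Circle.coe_pow, Circle.coe_one] at h11
          exact h11
        rw [show ((a : ℂ) ^ ((k : ℕ) : ℤ)) = (a : ℂ) ^ k from zpow_natCast _ _, h10, one_mul]
      ext w
      obtain ⟨c, u, rfl⟩ := hdec w
      have h1 : (σ ^ (k : ℤ)) (c • v + ↑u) = c • v + ↑((τ ^ (k : ℤ)) u) := hdecz _ _ _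
      have h2 : (τ ^ (k : ℤ)) u = u := φ.injective (hτφn u)
      have h3 : (σ ^ (k : ℤ)) (c • v + ↑u) = c • v + ↑u := by rw [h1, h2]
      rw [← zpow_natCast σ k]
      rw [h3]
      simp
    have hdense := circle_dense a hroot
    obtain ⟨c, u, hxdec⟩ := hdec x
    set g : ℂ → E3 := fun z => c • v + ↑(φ.symm (z * φ u)) with hg
    have hgc : Continuous g := by
      apply Continuous.add continuous_const
      exact continuous_subtype_val.comp
        (φ.symm.continuous.comp ((continuous_id.mul continuous_const)))
    have hgval : ∀ n : ℤ, g ((a : ℂ) ^ (2 * n)) = (σ ^ (2 * n)) x := by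
      intro n
      rw [hg]
      simp only
      rw [show (a : ℂ) ^ (2 * n) * φ u = φ ((τ ^ (2 * n)) u) by rw [hτzφ],
        φ.symm_apply_apply, hxdec, hdecz]
    have hga : g (a : ℂ) = σ x := by
      rw [hg]
      simp only
      rw [show (a : ℂ) * φ u = φ (τ u) by rw [hτφ, haB], φ.symm_apply_apply, hxdec]
      rw [map_add, LinearIsometryEquiv.map_smul, hvfix, hτcoe]
    have himg : g '' {w : ℂ | ∃ n : ℤ, (a : ℂ) ^ (2 * n) = w} ⊆
        Set.range fun n : ℤ => (σ ^ (2 * n)) x := by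
      rintro - ⟨w, ⟨n, rfl⟩, rfl⟩
      exact ⟨n, (hgval n).symm⟩
    have h5 : σ x ∈ g '' closure {w : ℂ | ∃ n : ℤ, (a : ℂ) ^ (2 * n) = w} :=
      ⟨(a : ℂ), hdense, hga⟩
    exact closure_mono himg (image_closure_subset_closure_image hgc h5)
  · exfalso
    apply htf 2 (by norm_num)
    have hBB : ∀ z : ℂ, B (B z) = z := by
      intro z
      have hB1 : ∀ w : ℂ, B w = (a : ℂ) * (starRingEnd ℂ) w := by
        intro w
        rw [ha]
        simp [rotation_apply]
      rw [hB1, hB1]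
      rw [map_mul]
      rw [Complex.conj_conj]
      have h6 : (starRingEnd ℂ) (a : ℂ) = ((a⁻¹ : Circle) : ℂ) := (Circle.coe_inv_eq_conj a).symm
      rw [h6]
      rw [← mul_assoc]
      have h7 : (a : ℂ) * ((a⁻¹ : Circle) : ℂ) = ((a * a⁻¹ : Circle) : ℂ) := by push_cast; ring
      rw [h7, mul_inv_cancel]
      simp
    have hττ : ∀ u : K, τ (τ u) = u := by
      intro u
      apply φ.injective
      rw [hτφ, hτφ, hBB]
    ext w
    obtain ⟨c, u, rfl⟩ := hdec w
    have h1 : (σ ^ 2) (c • v + ↑u) = c • v + ↑((τ ^ 2) u) := by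
      have h0 := hdecz 2 c u
      rw [← zpow_natCast σ 2, ← zpow_natCast τ 2]
      exact_mod_cast h0
    have h2 : (τ ^ 2) u = u := by
      rw [pow_two, LinearIsometryEquiv.coe_mul, Function.comp_apply, hττ]
    rw [h1, h2]
    simp

end Geom

end Helpers

set_option maxHeartbeats 2000000 in
/-- If `G` is a group of rotations of `S²` which is free as an abstract group, and a system of
congruences has a quasi-solution in `S²` by open sets with all witnesses in `G`, then the
system is weak. -/
theorem stmt_9 {r m : ℕ} (L R : Fin m → Set (Fin r))
    (G : Subgroup (E3 ≃ₗᵢ[ℝ] E3))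
    (hGrot : ∀ g ∈ G, IsRotation g)
    (hGfree : IsFreeGroup G)
    (A : Fin r → Set S2)
    (hopen : ∀ k, IsOpen (A k))
    (hqd : ∀ k k', k ≠ k' → IsMeagre (A k ∩ A k'))
    (hcover : (⋃ k, A k) ∈ residual S2)
    (hwit : ∀ i, ∃ σ ∈ G,
      IsMeagre (symmDiff (sphereMap σ '' ⋃ k ∈ L i, A k) (⋃ k ∈ R i, A k))) :
    SysWeak L R := by
  classical
  haveI hcs : CompleteSpace S2 :=
    IsClosed.completeSpace_coe (hs := show IsClosed (S2 : Set E3) from Metric.isClosed_sphere)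
  haveI hnon : Nonempty S2 :=
    ⟨⟨EuclideanSpace.single 0 1, show _ ∈ Metric.sphere (0 : E3) 1 by
      simp [EuclideanSpace.norm_single]⟩⟩
  -- homeomorphisms of the sphere induced by linear isometries
  let e : (E3 ≃ₗᵢ[ℝ] E3) → (S2 ≃ₜ S2) := fun f =>
    { toEquiv := ⟨sphereMap f, sphereMap f.symm,
        fun x => Subtype.ext (f.symm_apply_apply x),
        fun x => Subtype.ext (f.apply_symm_apply x)⟩
      continuous_toFun := Continuous.subtype_mk (f.continuous.comp continuous_subtype_val) _
      continuous_invFun := Continuous.subtype_mk (f.symm.continuous.comp continuous_subtype_val) _ }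
  have hecoe : ∀ f, ⇑(e f) = sphereMap f := fun f => rfl
  have hmul : ∀ (f g : E3 ≃ₗᵢ[ℝ] E3) (x : S2),
      sphereMap (f * g) x = sphereMap f (sphereMap g x) := fun f g x => Subtype.ext rfl
  have hone : ∀ x : S2, sphereMap 1 x = x := fun x => Subtype.ext rfl
  set U : Set (Fin r) → Set S2 := fun P => ⋃ k ∈ P, A k with hU
  have hUopen : ∀ P, IsOpen (U P) := fun P => isOpen_biUnion (fun k _ => hopen k)
  have meag0 : ∀ P, IsMeagre (U P ∩ U Pᶜ) := by
    intro P
    have hsub : U P ∩ U Pᶜ ⊆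
        ⋃ q : {p : Fin r × Fin r // p.1 ≠ p.2}, (A q.1.1 ∩ A q.1.2) := by
      rintro x ⟨hx1, hx2⟩
      simp only [hU, Set.mem_iUnion, exists_prop] at hx1 hx2
      obtain ⟨k, hk, hxk⟩ := hx1
      obtain ⟨k', hk', hxk'⟩ := hx2
      refine Set.mem_iUnion.2 ⟨⟨(k, k'), fun hkk => hk' ?_⟩, hxk, hxk'⟩
      rw [show k = k' from hkk] at hk
      exact hk
    exact ((myIsMeagre_iUnion (f := fun q : {p : Fin r × Fin r // p.1 ≠ p.2} => A q.1.1 ∩ A q.1.2) (fun q => hqd _ _ q.2)).mono hsub)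
  have meag1 : IsMeagre ((⋃ k, A k)ᶜ) := by
    rw [IsMeagre, compl_compl]; exact hcover
  have meag2 : ∀ P, IsMeagre (symmDiff (U Pᶜ) ((U P)ᶜ)) := by
    intro P
    have hsub : symmDiff (U Pᶜ) ((U P)ᶜ) ⊆ (U P ∩ U Pᶜ) ∪ (⋃ k, A k)ᶜ := by
      rw [Set.symmDiff_def]
      rintro x (⟨hx1, hx2⟩ | ⟨hx1, hx2⟩)
      · exact Or.inl ⟨not_not.1 hx2, hx1⟩
      · refine Or.inr (fun hx => ?_)
        obtain ⟨s, ⟨k, rfl⟩, hxs⟩ := hx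
        by_cases hkP : k ∈ P
        · exact hx1 (Set.mem_biUnion hkP hxs)
        · exact hx2 (Set.mem_biUnion hkP hxs)
    exact (myIsMeagre_union (meag0 P) meag1).mono hsub
  intro P hP
  -- the main induction: every deducible congruence has a witness in G
  have main : ∀ Pa Qa, CongDed {p | ∃ i, p = (L i, R i)} Pa Qa →
      ∃ σ ∈ G, IsMeagre (symmDiff (sphereMap σ '' U Pa) (U Qa)) := by
    intro Pa Qa h
    induction h with
    | @base Pb Qb hmem =>
      obtain ⟨i, hi⟩ := hmem
      obtain ⟨σ, hσG, hσ⟩ := hwit i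
      have h1 : Pb = L i := congrArg Prod.fst hi
      have h2 : Qb = R i := congrArg Prod.snd hi
      rw [h1, h2]
      exact ⟨σ, hσG, hσ⟩
    | @symm Pb Qb h ih =>
      obtain ⟨σ, hσG, hσ⟩ := ih
      refine ⟨σ⁻¹, inv_mem hσG, ?_⟩
      have h1 : IsMeagre ((e σ⁻¹) '' (symmDiff (sphereMap σ '' U Pb) (U Qb))) :=
        myIsMeagre_image _ hσ
      rw [myImage_symmDiff, hecoe] at h1
      have h2 : sphereMap σ⁻¹ '' (sphereMap σ '' U Pb) = U Pb := by
        rw [← Set.image_comp]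
        have h3 : (sphereMap σ⁻¹ ∘ sphereMap σ) = id := funext fun z => by
          rw [Function.comp_apply, ← hmul, inv_mul_cancel]
          exact hone z
        rw [h3, Set.image_id]
      rw [h2] at h1
      rw [symmDiff_comm]
      exact h1
    | @compl Pb Qb h ih =>
      obtain ⟨σ, hσG, hσ⟩ := ih
      refine ⟨σ, hσG, ?_⟩
      have hA1 : IsMeagre (symmDiff (sphereMap σ '' U Pbᶜ) ((sphereMap σ '' U Pb)ᶜ)) := by
        have h1 : IsMeagre ((e σ) '' symmDiff (U Pbᶜ) ((U Pb)ᶜ)) :=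
          myIsMeagre_image _ (meag2 Pb)
        rw [myImage_symmDiff, Set.image_compl_eq (e σ).bijective, hecoe] at h1
        exact h1
      have hA2 : IsMeagre (symmDiff ((sphereMap σ '' U Pb)ᶜ) ((U Qb)ᶜ)) := by
        rw [compl_symmDiff_compl]; exact hσ
      have hA3 : IsMeagre (symmDiff ((U Qb)ᶜ) (U Qbᶜ)) := by
        rw [symmDiff_comm]; exact meag2 Qb
      have htri : symmDiff (sphereMap σ '' U Pbᶜ) (U Qbᶜ) ⊆
          (symmDiff (sphereMap σ '' U Pbᶜ) ((sphereMap σ '' U Pb)ᶜ)) ∪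
          ((symmDiff ((sphereMap σ '' U Pb)ᶜ) ((U Qb)ᶜ)) ∪
            (symmDiff ((U Qb)ᶜ) (U Qbᶜ))) := by
        refine le_trans (symmDiff_triangle _ ((sphereMap σ '' U Pb)ᶜ) _) ?_
        exact Set.union_subset_union subset_rfl (symmDiff_triangle _ ((U Qb)ᶜ) _)
      exact (myIsMeagre_union hA1 (myIsMeagre_union hA2 hA3)).mono htri
    | @trans Pb Qb Tb h1 h2 ih1 ih2 =>
      obtain ⟨σ, hσG, hσ⟩ := ih1
      obtain ⟨π, hπG, hπ⟩ := ih2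
      refine ⟨π * σ, mul_mem hπG hσG, ?_⟩
      have hB1 : IsMeagre
          (symmDiff (sphereMap π '' (sphereMap σ '' U Pb)) (sphereMap π '' U Qb)) := by
        have h3 := myIsMeagre_image (e π) hσ
        rw [myImage_symmDiff, hecoe] at h3
        exact h3
      have hcomp : sphereMap (π * σ) '' U Pb = sphereMap π '' (sphereMap σ '' U Pb) := by
        rw [← Set.image_comp]
        exact congrArg (fun f => f '' U Pb) (funext fun z => hmul π σ z)
      have htri : symmDiff (sphereMap (π * σ) '' U Pb) (U Tb) ⊆
          symmDiff (sphereMap π '' (sphereMap σ '' U Pb)) (sphereMap π '' U Qb) ∪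
          symmDiff (sphereMap π '' U Qb) (U Tb) := by
        rw [hcomp]
        exact symmDiff_triangle _ _ _
      exact (myIsMeagre_union hB1 hπ).mono htri
  obtain ⟨σ, hσG, hm⟩ := main P Pᶜ hP
  set V := U P with hV
  have hVopen : IsOpen V := hUopen P
  have hm' : IsMeagre (symmDiff (sphereMap σ '' V) Vᶜ) := by
    refine (myIsMeagre_union hm (meag2 P)).mono ?_
    exact symmDiff_triangle _ (U Pᶜ) _
  have hmeagre_univ : ¬ IsMeagre (Set.univ : Set S2) := by
    intro h
    exact (Set.univ_nonempty).ne_empty (myOpen_meagre_empty isOpen_univ h)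
  have hVne : V.Nonempty := by
    rcases Set.eq_empty_or_nonempty V with h | h
    · exfalso
      apply hmeagre_univ
      have h2 : symmDiff (sphereMap σ '' V) Vᶜ = Set.univ := by
        rw [h]
        simp [Set.symmDiff_def]
      rwa [h2] at hm'
    · exact h
  have hσne : σ ≠ 1 := by
    rintro rfl
    apply hmeagre_univ
    have h1 : sphereMap 1 '' V = V := by
      rw [show sphereMap (1 : E3 ≃ₗᵢ[ℝ] E3) = id from funext hone, Set.image_id]
    rw [h1] at hm'
    have h2 : symmDiff V Vᶜ = Set.univ := by
      rw [Set.symmDiff_def]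
      ext z
      by_cases hz : z ∈ V <;> simp [hz]
    rwa [h2] at hm'
  have htf : ∀ n : ℕ, n ≠ 0 → σ ^ n ≠ 1 := by
    intro n hn h
    have hg : (⟨σ, hσG⟩ : G) ≠ 1 := by
      intro hh
      exact hσne (by simpa using congrArg Subtype.val hh)
    apply freeGroup_tf hGfree hg hn
    exact Subtype.ext (by rw [SubgroupClass.coe_pow]; exact h)
  have hdet : LinearMap.det (σ.toLinearEquiv : E3 →ₗ[ℝ] E3) = 1 := hGrot σ hσG
  set W := interior (closure V) with hW
  have hWopen : IsOpen W := isOpen_interior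
  have hVsubW : V ⊆ W := interior_maximal subset_closure hVopen
  have hclWV : closure W = closure V := by
    apply subset_antisymm
    · have := closure_mono (interior_subset : W ⊆ closure V)
      rwa [closure_closure] at this
    · exact closure_mono hVsubW
  have hdisj : sphereMap σ '' V ∩ V = ∅ := by
    apply myOpen_meagre_empty (((e σ).isOpenMap V hVopen).inter hVopen)
    refine hm'.mono ?_
    rintro x ⟨hx1, hx2⟩
    rw [Set.symmDiff_def]
    exact Or.inl ⟨hx1, not_not_intro hx2⟩
  have hm2 : IsMeagre (symmDiff (sphereMap σ '' (sphereMap σ '' V)) V) := by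
    have h1 := myIsMeagre_image (e σ) hm'
    rw [myImage_symmDiff, Set.image_compl_eq (e σ).bijective, hecoe] at h1
    have h2 : IsMeagre (symmDiff ((sphereMap σ '' V)ᶜ) V) := by
      have h3 := compl_symmDiff_compl (a := sphereMap σ '' V) (b := Vᶜ)
      rw [compl_compl] at h3
      rw [h3]
      exact hm'
    exact (myIsMeagre_union h1 h2).mono
      (symmDiff_triangle _ ((sphereMap σ '' V)ᶜ) _)
  have himgW : ∀ s : Set S2, sphereMap σ '' interior (closure s) =
      interior (closure (sphereMap σ '' s)) := by
    intro s
    rw [← hecoe, Homeomorph.image_interior, Homeomorph.image_closure]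
  have hWfix : sphereMap σ '' (sphereMap σ '' W) = W := by
    have hcl : closure (sphereMap σ '' (sphereMap σ '' V)) = closure V :=
      myClosure_eq_of_meagre_symmDiff
        ((e σ).isOpenMap _ ((e σ).isOpenMap V hVopen)) hVopen hm2
    rw [hW, himgW, himgW, hcl]
  have hWdisjV : sphereMap σ '' W ∩ V = ∅ := by
    rw [hW, himgW]
    set O := interior (closure (sphereMap σ '' V)) with hO
    have hOopen : IsOpen O := isOpen_interior
    have hsub : O ∩ V ⊆ closure (sphereMap σ '' V) := fun x hx => interior_subset hx.1
    have hdisj2 : sphereMap σ '' V ∩ (O ∩ V) = ∅ := by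
      rw [← Set.subset_empty_iff]
      rintro x ⟨hx1, _, hx3⟩
      rw [← hdisj]
      exact ⟨hx1, hx3⟩
    have h3 : closure (sphereMap σ '' V) ∩ (O ∩ V) = ∅ :=
      myDisjoint_closure (hOopen.inter hVopen) hdisj2
    rw [← Set.subset_empty_iff]
    intro x hx
    rw [← h3]
    exact ⟨hsub hx, hx⟩
  have hWdisj : sphereMap σ '' W ∩ closure W = ∅ := by
    have h1 : V ∩ (sphereMap σ '' W) = ∅ := by
      rw [Set.inter_comm]; exact hWdisjV
    have h2 : closure V ∩ (sphereMap σ '' W) = ∅ :=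
      myDisjoint_closure ((e σ).isOpenMap W hWopen) h1
    rw [hclWV, Set.inter_comm]
    exact h2
  obtain ⟨x, hxW⟩ : W.Nonempty := hVne.mono hVsubW
  have hWfix' : ∀ y : S2, y ∈ W → sphereMap σ⁻¹ (sphereMap σ⁻¹ y) ∈ W := by
    intro y hy
    rw [← hWfix] at hy
    obtain ⟨z1, hz1, hz1e⟩ := hy
    obtain ⟨z0, hz0, hz0e⟩ := hz1
    have hinv : ∀ w : S2, sphereMap σ⁻¹ (sphereMap σ w) = w := by
      intro w
      rw [← hmul, inv_mul_cancel, hone]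
    rw [← hz1e, ← hz0e, hinv, hinv]
    exact hz0
  have hT : ∀ n : ℤ, sphereMap (σ ^ (2 * n)) x ∈ W := by
    intro n
    induction n using Int.induction_on with
    | zero =>
      rw [mul_zero, zpow_zero, hone]
      exact hxW
    | succ k ih =>
      have hexp : σ ^ (2 * ((k : ℤ) + 1)) = σ * (σ * σ ^ (2 * (k : ℤ))) := by
        rw [show (2 : ℤ) * ((k : ℤ) + 1) = 1 + (1 + 2 * (k : ℤ)) by ring, zpow_add, zpow_add,
          zpow_one]
      rw [hexp, hmul, hmul, ← hWfix]
      exact Set.mem_image_of_mem _ (Set.mem_image_of_mem _ ih)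
    | pred k ih =>
      have hexp : σ ^ (2 * (-(k : ℤ) - 1)) = σ⁻¹ * (σ⁻¹ * σ ^ (2 * (-(k : ℤ)))) := by
        rw [show (2 : ℤ) * (-(k : ℤ) - 1) = (-1) + ((-1) + 2 * (-(k : ℤ))) by ring, zpow_add,
          zpow_add, zpow_neg_one]
      rw [hexp, hmul, hmul]
      exact hWfix' _ ih
  have hgeo := key_geom σ hdet htf (x : E3)
  have hsub2 : (Set.range fun n : ℤ => (σ ^ (2 * n)) (x : E3)) ⊆
      (fun z : S2 => (z : E3)) '' W := by
    rintro - ⟨n, rfl⟩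
    exact ⟨sphereMap (σ ^ (2 * n)) x, hT n, rfl⟩
  have h6 : σ (x : E3) ∈ closure ((fun z : S2 => (z : E3)) '' W) :=
    closure_mono hsub2 hgeo
  have h7 : sphereMap σ x ∈ closure W := by
    rw [closure_subtype]
    exact h6
  have h8 : sphereMap σ x ∈ sphereMap σ '' W := Set.mem_image_of_mem _ hxW
  have h9 : sphereMap σ x ∈ (∅ : Set S2) := by
    rw [← hWdisj]
    exact ⟨h8, h7⟩
  exact absurd h9 (Set.notMem_empty _)
end

section
/- If A is an open subset of S² with A ≠ ∅ and A ≠ S², then there do not exist two distinct lines ℓ and ℓ' through the origin in ℝ³ such that A is invariant under every rotation of S² about the axis ℓ and also invariant under every rotation of S² about the axis ℓ'. -/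
set_option maxHeartbeats 1000000

open Set

noncomputable section
namespace SphAux

def dot (x y : E3) : ℝ := x 0 * y 0 + x 1 * y 1 + x 2 * y 2

def cross (x y : E3) : E3 := (WithLp.equiv 2 (Fin 3 → ℝ)).symm
  ![x 1 * y 2 - x 2 * y 1, x 2 * y 0 - x 0 * y 2, x 0 * y 1 - x 1 * y 0]

@[simp] lemma cross_apply0 (x y : E3) : cross x y 0 = x 1 * y 2 - x 2 * y 1 := rfl
@[simp] lemma cross_apply1 (x y : E3) : cross x y 1 = x 2 * y 0 - x 0 * y 2 := rfl
@[simp] lemma cross_apply2 (x y : E3) : cross x y 2 = x 0 * y 1 - x 1 * y 0 := rfl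

lemma ext3 {x y : E3} (h0 : x 0 = y 0) (h1 : x 1 = y 1) (h2 : x 2 = y 2) : x = y := by
  refine PiLp.ext fun i => ?_
  fin_cases i
  · exact h0
  · exact h1
  · exact h2

def rotFun (u : E3) (c s : ℝ) (v : E3) : E3 :=
  c • v + s • cross u v + ((1 - c) * dot u v) • u

lemma rotFun_apply (u : E3) (c s : ℝ) (v : E3) (i : Fin 3) :
    rotFun u c s v i = c * v i + s * cross u v i + (1 - c) * dot u v * u i := by
  simp [rotFun, mul_assoc]

lemma dot_eq_inner (x y : E3) : dot x y = inner ℝ x y := by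
  simp [PiLp.inner_apply, Fin.sum_univ_three, dot, mul_comm]

lemma rot_rot (u : E3) (c s : ℝ) (hu : dot u u = 1) (hcs : c^2 + s^2 = 1) (v : E3) :
    rotFun u c s (rotFun u c (-s) v) = v := by
  have hu' : u 0 * u 0 + u 1 * u 1 + u 2 * u 2 = 1 := hu
  refine ext3 ?_ ?_ ?_
  · simp only [rotFun_apply, cross_apply0, cross_apply1, cross_apply2, dot]
    linear_combination (v 0 - (u 0*v 0+u 1*v 1+u 2*v 2) * u 0) * hcs
        + (s^2*v 0 + (1-c)^2*(u 0*v 0+u 1*v 1+u 2*v 2)*u 0) * hu'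
  · simp only [rotFun_apply, cross_apply0, cross_apply1, cross_apply2, dot]
    linear_combination (v 1 - (u 0*v 0+u 1*v 1+u 2*v 2) * u 1) * hcs
        + (s^2*v 1 + (1-c)^2*(u 0*v 0+u 1*v 1+u 2*v 2)*u 1) * hu'
  · simp only [rotFun_apply, cross_apply0, cross_apply1, cross_apply2, dot]
    linear_combination (v 2 - (u 0*v 0+u 1*v 1+u 2*v 2) * u 2) * hcs
        + (s^2*v 2 + (1-c)^2*(u 0*v 0+u 1*v 1+u 2*v 2)*u 2) * hu'

lemma rot_inner (u : E3) (c s : ℝ) (hu : dot u u = 1) (hcs : c^2 + s^2 = 1) (v w : E3) :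
    dot (rotFun u c s v) (rotFun u c s w) = dot v w := by
  have hu' : u 0 * u 0 + u 1 * u 1 + u 2 * u 2 = 1 := hu
  simp only [dot, rotFun_apply, cross_apply0, cross_apply1, cross_apply2]
  linear_combination ((v 0*w 0+v 1*w 1+v 2*w 2)
      - (u 0*v 0+u 1*v 1+u 2*v 2)*(u 0*w 0+u 1*w 1+u 2*w 2)) * hcs
    + (s^2*(v 0*w 0+v 1*w 1+v 2*w 2)
      + (1-c)^2*(u 0*v 0+u 1*v 1+u 2*v 2)*(u 0*w 0+u 1*w 1+u 2*w 2)) * hu'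

-- linearity
def rotL (u : E3) (c s : ℝ) : E3 →ₗ[ℝ] E3 where
  toFun := rotFun u c s
  map_add' v w := by
    refine ext3 ?_ ?_ ?_ <;>
      simp only [rotFun_apply, cross_apply0, cross_apply1, cross_apply2, dot, PiLp.add_apply] <;> ring
  map_smul' t v := by
    refine ext3 ?_ ?_ ?_ <;>
      simp only [rotFun_apply, cross_apply0, cross_apply1, cross_apply2, dot, PiLp.smul_apply,
        smul_eq_mul, RingHom.id_apply] <;> ring

@[simp] lemma rotL_apply (u : E3) (c s : ℝ) (v : E3) : rotL u c s v = rotFun u c s v := rfl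

-- determinant
lemma rotL_det (u : E3) (c s : ℝ) (hu : dot u u = 1) (hcs : c^2 + s^2 = 1) :
    LinearMap.det (rotL u c s) = 1 := by
  have hu' : u 0 * u 0 + u 1 * u 1 + u 2 * u 2 = 1 := hu
  rw [← LinearMap.det_toMatrix (EuclideanSpace.basisFun (Fin 3) ℝ).toBasis, Matrix.det_fin_three]
  simp only [LinearMap.toMatrix_apply, OrthonormalBasis.coe_toBasis,
    EuclideanSpace.basisFun_apply, OrthonormalBasis.coe_toBasis_repr_apply,
    EuclideanSpace.basisFun_repr, rotL_apply, rotFun_apply,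
    cross_apply0, cross_apply1, cross_apply2, dot, EuclideanSpace.single_apply]
  simp only [show ((0:Fin 3) = 1) = False by simp, show ((1:Fin 3) = 0) = False by simp,
    show ((2:Fin 3) = 0) = False by simp, show ((0:Fin 3) = 2) = False by simp,
    show ((1:Fin 3) = 2) = False by simp, show ((2:Fin 3) = 1) = False by simp,
    if_true, if_false, eq_self_iff_true]
  norm_num
  linear_combination ((1-c^3) + (u 0*u 0+u 1*u 1+u 2*u 2)*(1-c)*(1-c^2)) * hu'
    + (c*(u 0*u 0+u 1*u 1+u 2*u 2) + (1-c)*(u 0*u 0+u 1*u 1+u 2*u 2)^2) * hcs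
-- the linear isometry equivalence
def rotLIE (u : E3) (c s : ℝ) (hu : dot u u = 1) (hcs : c^2 + s^2 = 1) : E3 ≃ₗᵢ[ℝ] E3 :=
  LinearEquiv.isometryOfInner
    (LinearEquiv.ofLinear (rotL u c s) (rotL u c (-s))
      (LinearMap.ext fun v => by simpa using rot_rot u c s hu hcs v)
      (LinearMap.ext fun v => by
          simpa using rot_rot u c (-s) (by simpa using hu) (by simpa using hcs) v))
    (by intro v w
        rw [← dot_eq_inner, ← dot_eq_inner]
        simpa using rot_inner u c s hu hcs v w)

@[simp] lemma rotLIE_apply (u : E3) (c s : ℝ) (hu hcs) (v : E3) :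
    rotLIE u c s hu hcs v = rotFun u c s v := by
  simp [rotLIE]

lemma rotLIE_det (u : E3) (c s : ℝ) (hu hcs) :
    LinearMap.det ((rotLIE u c s hu hcs).toLinearEquiv : E3 →ₗ[ℝ] E3) = 1 := by
  have : ((rotLIE u c s hu hcs).toLinearEquiv : E3 →ₗ[ℝ] E3) = rotL u c s := rfl
  rw [this]; exact rotL_det u c s hu hcs

lemma rot_fix (u : E3) (c s : ℝ) (hu : dot u u = 1) : rotFun u c s u = u := by
  have hu' : u 0 * u 0 + u 1 * u 1 + u 2 * u 2 = 1 := hu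
  refine ext3 ?_ ?_ ?_ <;>
    simp only [rotFun_apply, cross_apply0, cross_apply1, cross_apply2, dot]
  · linear_combination (1-c) * (u 0) * hu'
  · linear_combination (1-c) * (u 1) * hu'
  · linear_combination (1-c) * (u 2) * hu'
-- bilinearity helpers
lemma dot_sub_right (x y z : E3) : dot x (y - z) = dot x y - dot x z := by
  simp only [dot, PiLp.sub_apply]; ring
lemma dot_sub_left (x y z : E3) : dot (x - y) z = dot x z - dot y z := by
  simp only [dot, PiLp.sub_apply]; ring
lemma dot_smul_right (t : ℝ) (x y : E3) : dot x (t • y) = t * dot x y := by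
  simp only [dot, PiLp.smul_apply, smul_eq_mul]; ring
lemma dot_smul_left (t : ℝ) (x y : E3) : dot (t • x) y = t * dot x y := by
  simp only [dot, PiLp.smul_apply, smul_eq_mul]; ring
lemma dot_add_right (x y z : E3) : dot x (y + z) = dot x y + dot x z := by
  simp only [dot, PiLp.add_apply]; ring
lemma dot_add_left (x y z : E3) : dot (x + y) z = dot x z + dot y z := by
  simp only [dot, PiLp.add_apply]; ring
lemma dot_comm (x y : E3) : dot x y = dot y x := by simp only [dot]; ring
lemma cross_add_right (u x y : E3) : cross u (x + y) = cross u x + cross u y := by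
  refine ext3 ?_ ?_ ?_ <;> simp only [cross_apply0, cross_apply1, cross_apply2,
    PiLp.add_apply] <;> ring
lemma cross_smul_right (t : ℝ) (u x : E3) : cross u (t • x) = t • cross u x := by
  refine ext3 ?_ ?_ ?_ <;> simp only [cross_apply0, cross_apply1, cross_apply2,
    PiLp.smul_apply, smul_eq_mul] <;> ring
lemma cross_self (u : E3) : cross u u = 0 := by
  refine ext3 ?_ ?_ ?_ <;> simp only [cross_apply0, cross_apply1, cross_apply2] <;>
    simp <;> ring
lemma dot_self_zero {p : E3} (h : dot p p = 0) : p = 0 := by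
  have h' : p 0 * p 0 + p 1 * p 1 + p 2 * p 2 = 0 := h
  have h0 : p 0 = 0 := by nlinarith [sq_nonneg (p 0), sq_nonneg (p 1), sq_nonneg (p 2)]
  have h1 : p 1 = 0 := by nlinarith [sq_nonneg (p 0), sq_nonneg (p 1), sq_nonneg (p 2)]
  have h2 : p 2 = 0 := by nlinarith [sq_nonneg (p 0), sq_nonneg (p 1), sq_nonneg (p 2)]
  refine ext3 ?_ ?_ ?_ <;> simp [h0, h1, h2]
lemma keyL (u p q : E3) (hu : dot u u = 1) (hp : dot u p = 0) (hq : dot u q = 0) :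
    dot p p • q = dot p q • p + dot (cross u p) q • cross u p := by
  have hu' : u 0 * u 0 + u 1 * u 1 + u 2 * u 2 = 1 := hu
  have hp' : u 0 * p 0 + u 1 * p 1 + u 2 * p 2 = 0 := hp
  have hq' : u 0 * q 0 + u 1 * q 1 + u 2 * q 2 = 0 := hq
  refine ext3 ?_ ?_ ?_ <;>
    simp only [PiLp.add_apply, PiLp.smul_apply, smul_eq_mul, cross_apply0, cross_apply1,
      cross_apply2, dot]
  · linear_combination (-((p 1*(u 0*q 1 - u 1*q 0) - p 2*(u 2*q 0 - u 0*q 2)))) * hp' + ((p 1*(u 0*p 1 - u 1*p 0) - p 2*(u 2*p 0 - u 0*p 2))) * hq' + (-((p 1*(q 0*p 1 - q 1*p 0) - p 2*(q 2*p 0 - q 0*p 2)))) * hu'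
  · linear_combination (-((p 2*(u 1*q 2 - u 2*q 1) - p 0*(u 0*q 1 - u 1*q 0)))) * hp' + ((p 2*(u 1*p 2 - u 2*p 1) - p 0*(u 0*p 1 - u 1*p 0))) * hq' + (-((p 2*(q 1*p 2 - q 2*p 1) - p 0*(q 0*p 1 - q 1*p 0)))) * hu'
  · linear_combination (-((p 0*(u 2*q 0 - u 0*q 2) - p 1*(u 1*q 2 - u 2*q 1)))) * hp' + ((p 0*(u 2*p 0 - u 0*p 2) - p 1*(u 1*p 2 - u 2*p 1))) * hq' + (-((p 0*(q 2*p 0 - q 0*p 2) - p 1*(q 1*p 2 - q 2*p 1)))) * hu'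

lemma rot_trans (u x y : E3) (hu : dot u u = 1) (hx : dot x x = 1) (hy : dot y y = 1)
    (hxy : dot u x = dot u y) : ∃ c s : ℝ, c^2 + s^2 = 1 ∧ rotFun u c s x = y := by
  set a := dot u x with ha
  set p := x - a • u with hpdef
  set q := y - a • u with hqdef
  have hp : dot u p = 0 := by
    rw [hpdef, dot_sub_right, dot_smul_right, hu]; ring
  have hq : dot u q = 0 := by
    rw [hqdef, dot_sub_right, dot_smul_right, hu, ← hxy]; ring
  have hpp : dot p p = 1 - a^2 := by
    rw [hpdef, dot_sub_left, dot_sub_right, dot_sub_right, dot_smul_right, dot_smul_left,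
      dot_smul_left, dot_smul_right, hx, hu, dot_comm x u, ← ha]; ring
  have hqq : dot q q = 1 - a^2 := by
    rw [hqdef, dot_sub_left, dot_sub_right, dot_sub_right, dot_smul_right, dot_smul_left,
      dot_smul_left, dot_smul_right, hy, hu, dot_comm y u, ← hxy]; ring
  have hxpq : x = p + a • u := by rw [hpdef]; abel
  have hyq : y = q + a • u := by rw [hqdef]; abel
  by_cases h0 : dot p p = 0
  · have hp0 : p = 0 := dot_self_zero h0
    have hq0 : q = 0 := dot_self_zero (by rw [hqq, ← hpp, h0])
    refine ⟨1, 0, by norm_num, ?_⟩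
    have hxy' : x = y := by rw [hxpq, hyq, hp0, hq0]
    rw [rotFun, hxy']; simp
  · refine ⟨dot p q / dot p p, dot (cross u p) q / dot p p, ?_, ?_⟩
    · have hpar : dot p q * dot p q + dot (cross u p) q * dot (cross u p) q
          = dot p p * dot q q := by
        have := congrArg (fun z => dot z q) (keyL u p q hu hp hq)
        simpa [dot_smul_left, dot_add_left] using this.symm
      have hqp : dot q q = dot p p := by rw [hqq, hpp]
      field_simp
      linear_combination hpar + dot p p * hqp
    · have hux : dot u x = a := rfl
      have hcx : cross u x = cross u p := by
        rw [hxpq, cross_add_right, cross_smul_right, cross_self, smul_zero, add_zero]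
      have key := keyL u p q hu hp hq
      set c := dot p q / dot p p with hc
      set s := dot (cross u p) q / dot p p with hs
      have hc' : dot p q = c * dot p p := by rw [hc]; field_simp
      have hs' : dot (cross u p) q = s * dot p p := by rw [hs]; field_simp
      rw [hc', hs'] at key
      have key2 : dot p p • q = dot p p • (c • p + s • cross u p) := by
        rw [key]; module
      have hq' : q = c • p + s • cross u p := smul_right_injective E3 h0 key2
      rw [rotFun, hcx, hux, hxpq, hyq, hq']
      module
lemma compat (u w : E3) (hu : dot u u = 1) (hw : dot w w = 1) (ht2 : dot u w ^ 2 < 1)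
    (a b : ℝ) (hab : a^2 + b^2 - 2 * dot u w * a * b + dot u w ^ 2 ≤ 1) :
    ∃ x : E3, dot x x = 1 ∧ dot u x = a ∧ dot w x = b := by
  set t := dot u w with htdef
  have e1 : dot u (cross u w) = 0 := by
    simp only [dot, cross_apply0, cross_apply1, cross_apply2]; ring
  have e2 : dot w (cross u w) = 0 := by
    simp only [dot, cross_apply0, cross_apply1, cross_apply2]; ring
  have e3 : dot (cross u w) (cross u w) = dot u u * dot w w - dot u w * dot u w := by
    simp only [dot, cross_apply0, cross_apply1, cross_apply2]; ring
  rw [hu, hw, ← htdef] at e3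
  have e4 : dot w u = t := (dot_comm w u).trans htdef.symm
  set d : ℝ := 1 - t^2 with hddef
  have hd : d ≠ 0 := by nlinarith
  set N : ℝ := 1 - t^2 - (a^2 + b^2 - 2*t*a*b) with hNdef
  have hN : 0 ≤ N := by rw [hNdef]; nlinarith
  set g : ℝ := Real.sqrt N with hgdef
  have hsq : g^2 = N := Real.sq_sqrt hN
  refine ⟨(1/d) • ((a - t*b) • u + (b - t*a) • w + g • cross u w), ?_, ?_, ?_⟩
  · have hS : (a-t*b)*((a-t*b)*1 + (b-t*a)*t + g*0)
        + (b-t*a)*((a-t*b)*t + (b-t*a)*1 + g*0)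
        + g*((a-t*b)*0 + (b-t*a)*0 + g*(1 - t*t)) = d^2 := by
      linear_combination (1 - t*t) * hsq
    rw [dot_smul_left, dot_smul_right]
    simp only [dot_add_left, dot_add_right, dot_smul_left, dot_smul_right, hu, hw, e1, e2, e3,
      e4, ← htdef, dot_comm (cross u w) u, dot_comm (cross u w) w]
    field_simp
    linear_combination hS
  · rw [dot_smul_right]
    simp only [dot_add_right, dot_smul_right, hu, e1, ← htdef]
    field_simp; ring
  · rw [dot_smul_right]
    simp only [dot_add_right, dot_smul_right, hw, e2, e4, dot_comm w u, ← htdef]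
    field_simp; ring


lemma dep_of_t2 (u w : E3) (hu : dot u u = 1) (hw : dot w w = 1) (ht2 : dot u w ^ 2 = 1) :
    w = dot u w • u := by
  have h : dot (w - dot u w • u) (w - dot u w • u) = 0 := by
    simp only [dot_sub_left, dot_sub_right, dot_smul_left, dot_smul_right, hu, hw,
      dot_comm w u]
    linear_combination -ht2
  have := dot_self_zero h
  have h2 : w - dot u w • u + dot u w • u = 0 + dot u w • u := by rw [this]
  simpa using h2
lemma dot_self_sphere {x : E3} (h : x ∈ Metric.sphere (0:E3) 1) : dot x x = 1 := by
  rw [dot_eq_inner, real_inner_self_eq_norm_sq]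
  rw [mem_sphere_zero_iff_norm] at h
  rw [h]; norm_num

lemma norm_of_dot {x : E3} (h : dot x x = 1) : ‖x‖ = 1 := by
  rw [dot_eq_inner, real_inner_self_eq_norm_sq] at h
  nlinarith [norm_nonneg x]

lemma cs_dot {u x : E3} (hu : dot u u = 1) (hx : dot x x = 1) : |dot u x| ≤ 1 := by
  have := abs_real_inner_le_norm u x
  rw [norm_of_dot hu, norm_of_dot hx] at this
  rw [dot_eq_inner]; simpa using this

lemma main_closed (u w : E3) (hu : dot u u = 1) (hw : dot w w = 1)
    (ht2 : dot u w ^ 2 < 1)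
    (B : Set E3) (hBc : IsClosed B) (hBs : B ⊆ Metric.sphere 0 1) (hBne : B.Nonempty)
    (hBu : ∀ c s : ℝ, c^2 + s^2 = 1 → ∀ x ∈ B, rotFun u c s x ∈ B)
    (hBw : ∀ c s : ℝ, c^2 + s^2 = 1 → ∀ x ∈ B, rotFun w c s x ∈ B) :
    ∀ z : E3, dot z z = 1 → z ∈ B := by
  set t := dot u w with htdef
  have hwu : dot w u = t := (dot_comm w u).trans htdef.symm
  -- saturation
  have hsatU : ∀ x ∈ B, ∀ y : E3, dot y y = 1 → dot u y = dot u x → y ∈ B := by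
    intro x hx y hy hxy
    obtain ⟨c, s, hcs, hrot⟩ := rot_trans u x y hu (dot_self_sphere (hBs hx)) hy hxy.symm
    rw [← hrot]; exact hBu c s hcs x hx
  have hsatW : ∀ x ∈ B, ∀ y : E3, dot y y = 1 → dot w y = dot w x → y ∈ B := by
    intro x hx y hy hxy
    obtain ⟨c, s, hcs, hrot⟩ := rot_trans w x y hw (dot_self_sphere (hBs hx)) hy hxy.symm
    rw [← hrot]; exact hBw c s hcs x hx
  set D : Set ℝ := (fun x => dot u x) '' B with hDdef
  have hDsub : D ⊆ Set.Icc (-1:ℝ) 1 := by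
    rintro a ⟨x, hx, rfl⟩
    have := cs_dot hu (dot_self_sphere (hBs hx))
    rw [abs_le] at this; exact this
  have hDclosed : IsClosed D := by
    have hcont : Continuous fun x : E3 => dot u x := by
      simp only [dot_eq_inner]
      exact Continuous.inner continuous_const continuous_id
    exact ((IsCompact.of_isClosed_subset (isCompact_sphere 0 1) hBc hBs).image hcont).isClosed
  have hDne : D.Nonempty := hBne.image _
  -- spreading step
  have hstep : ∀ a ∈ D, ∀ a' : ℝ, (a' - t^2*a)^2 ≤ (1-t^2)*(1-t^2*a^2) → a' ∈ D := by
    rintro a ⟨x, hxB, hxa⟩ a' h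
    have hxa' : dot u x = a := hxa
    have ha1 : a^2 ≤ 1 := by
      have h1 := cs_dot hu (dot_self_sphere (hBs hxB))
      rw [← hxa']; nlinarith [h1, sq_abs (dot u x), abs_nonneg (dot u x)]
    obtain ⟨y, hy1, hyu, hyw⟩ := compat u w hu hw ht2 a (t*a)
      (by nlinarith [mul_nonneg (by nlinarith : (0:ℝ) ≤ 1 - t^2) (by nlinarith : (0:ℝ) ≤ 1 - a^2)])
    have hyB : y ∈ B := hsatU x hxB y hy1 (by rw [hyu, hxa'])
    have ht2' : dot w u ^ 2 < 1 := by rw [hwu]; exact ht2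
    obtain ⟨y', hy'1, hy'w, hy'u⟩ := compat w u hw hu ht2' (t*a) a' (by rw [hwu]; nlinarith [h])
    have hy'B : y' ∈ B := hsatW y hyB y' hy'1 (by rw [hy'w, hyw])
    exact ⟨y', hy'B, hy'u⟩
  -- openness in Icc
  have hopen : ∀ a ∈ D, ∃ ε : ℝ, 0 < ε ∧
      ∀ a' ∈ Set.Icc (-1:ℝ) 1, |a' - a| < ε → a' ∈ D := by
    intro a haD
    have haI := hDsub haD
    set k := t^2 with hkdef
    have hk0 : 0 ≤ k := sq_nonneg t
    have hk1 : k < 1 := ht2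
    rcases lt_or_ge (a^2) 1 with hlt | hge
    · have hden : (0:ℝ) < 2*(1-k)+1 := by nlinarith
      have hnum : (0:ℝ) < (1-k)*(1-a^2) := by nlinarith
      set ε := min 1 ((1-k)*(1-a^2)/(2*(1-k)+1)) with hεdef
      have hε0 : 0 < ε := lt_min one_pos (div_pos hnum hden)
      refine ⟨ε, hε0, ?_⟩
      intro a' _ habs
      have hε1 : ε ≤ 1 := min_le_left _ _
      have hε2 : (2*(1-k)+1) * ε ≤ (1-k)*(1-a^2) := by
        calc (2*(1-k)+1) * ε
            ≤ (2*(1-k)+1) * ((1-k)*(1-a^2)/(2*(1-k)+1)) :=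
              mul_le_mul_of_nonneg_left (min_le_right _ _) (le_of_lt hden)
          _ = (1-k)*(1-a^2) := by field_simp
      rw [abs_lt] at habs
      obtain ⟨hd2, hd1⟩ := habs
      have p1 : (0:ℝ) ≤ (1+a) * (ε-(a'-a)) := mul_nonneg (by linarith [haI.1]) (by linarith)
      have p2 : (0:ℝ) ≤ (1-a) * (ε+(a'-a)) := mul_nonneg (by linarith [haI.2]) (by linarith)
      have p3 : (0:ℝ) ≤ (ε-(a'-a)) * (ε+(a'-a)) := mul_nonneg (by linarith) (by linarith)
      have had : a*(a'-a) ≤ ε := by nlinarith [p1, p2]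
      have hdd : (a'-a)^2 ≤ ε := by nlinarith [p3, hε1, hε0]
      have h2ad : 2*(1-k)*(a*(a'-a)) ≤ 2*(1-k)*ε := by
        apply mul_le_mul_of_nonneg_left had; nlinarith
      refine hstep a haD a' ?_
      nlinarith [h2ad, hdd, hε2]
    · have ha2 : a^2 = 1 := le_antisymm (by nlinarith [haI.1, haI.2]) hge
      refine ⟨2*(1-k), by nlinarith, ?_⟩
      intro a' haI' habs
      rw [abs_lt] at habs
      refine hstep a haD a' ?_
      have hfac : (a-1)*(a+1) = 0 := by nlinarith
      rcases mul_eq_zero.mp hfac with hc | hc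
      · have ha : a = 1 := by linarith
        rw [ha]
        have hm := mul_nonneg (by linarith [haI'.2] : (0:ℝ) ≤ 1 - a')
          (by rw [ha] at habs; linarith [habs.1] : (0:ℝ) ≤ a' + 1 - 2*k)
        nlinarith [hm]
      · have ha : a = -1 := by linarith
        rw [ha]
        have hm := mul_nonneg (by linarith [haI'.1] : (0:ℝ) ≤ 1 + a')
          (by rw [ha] at habs; linarith [habs.2] : (0:ℝ) ≤ 1 - 2*k - a')
        nlinarith [hm]
  -- connectedness: D = Icc
  have hIccD : Set.Icc (-1:ℝ) 1 ⊆ D := by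
    by_contra hcon
    rw [Set.not_subset] at hcon
    obtain ⟨z0, hz0I, hz0D⟩ := hcon
    choose! ε hεpos hεmem using hopen
    set U : Set ℝ := ⋃ p : D, Metric.ball p.1 (ε p.1) with hUdef
    have hUopen : IsOpen U := isOpen_iUnion fun p => Metric.isOpen_ball
    have hVopen : IsOpen Dᶜ := hDclosed.isOpen_compl
    have hcover : Set.Icc (-1:ℝ) 1 ⊆ U ∪ Dᶜ := by
      intro a haI
      by_cases haD : a ∈ D
      · exact Or.inl (Set.mem_iUnion.mpr ⟨⟨a, haD⟩, by
          simpa [Metric.mem_ball] using hεpos a haD⟩)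
      · exact Or.inr haD
    have hne1 : (Set.Icc (-1:ℝ) 1 ∩ U).Nonempty := by
      obtain ⟨a0, ha0⟩ := hDne
      exact ⟨a0, hDsub ha0, Set.mem_iUnion.mpr ⟨⟨a0, ha0⟩, by
        simpa [Metric.mem_ball] using hεpos a0 ha0⟩⟩
    have hne2 : (Set.Icc (-1:ℝ) 1 ∩ Dᶜ).Nonempty := ⟨z0, hz0I, hz0D⟩
    obtain ⟨y, hyI, hyU, hyV⟩ := isPreconnected_Icc _ _ hUopen hVopen hcover hne1 hne2
    obtain ⟨⟨a, haD⟩, hyball⟩ := Set.mem_iUnion.mp hyU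
    have : y ∈ D := hεmem a haD y hyI (by simpa [Metric.mem_ball, Real.dist_eq] using hyball)
    exact hyV this
  -- conclusion
  intro z hz
  have hzI : dot u z ∈ Set.Icc (-1:ℝ) 1 := by
    have := cs_dot hu hz
    rw [abs_le] at this; exact this
  obtain ⟨x, hxB, hxa⟩ := hIccD hzI
  exact hsatU x hxB z hz hxa.symm
-- extraction of a unit spanning vector
lemma exists_unit_span (ℓ : Submodule ℝ E3) (h : IsLine ℓ) :
    ∃ u : E3, dot u u = 1 ∧ ℓ = Submodule.span ℝ {u} := by
  have hbot : ℓ ≠ ⊥ := by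
    intro hb
    rw [IsLine, hb] at h
    simp [finrank_bot] at h
  obtain ⟨v, hvmem, hv0⟩ := Submodule.exists_mem_ne_zero_of_ne_bot hbot
  set u : E3 := ‖v‖⁻¹ • v with hudef
  have hnu : ‖u‖ = 1 := by
    rw [hudef, norm_smul, norm_inv, norm_norm, inv_mul_cancel₀ (norm_ne_zero_iff.mpr hv0)]
  have hdu : dot u u = 1 := by
    rw [dot_eq_inner, real_inner_self_eq_norm_sq, hnu]; norm_num
  refine ⟨u, hdu, ?_⟩
  have hspan : Submodule.span ℝ {u} = Submodule.span ℝ {v} := by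
    rw [hudef]
    exact Submodule.span_singleton_smul_eq
      (isUnit_iff_ne_zero.mpr (inv_ne_zero (norm_ne_zero_iff.mpr hv0))) v
  have hle : Submodule.span ℝ {v} ≤ ℓ := by
    rw [Submodule.span_singleton_le_iff_mem]; exact hvmem
  have heq : Submodule.span ℝ {v} = ℓ :=
    Submodule.eq_of_le_of_finrank_eq hle (by rw [finrank_span_singleton hv0, h])
  rw [hspan, heq]

-- homeomorphism of the sphere induced by a linear isometry equivalence
def sphHomeo (f : E3 ≃ₗᵢ[ℝ] E3) : S2 ≃ₜ S2 where
  toFun := sphereMap f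
  invFun := sphereMap f.symm
  left_inv x := by
    apply Subtype.ext
    simp [sphereMap]
  right_inv x := by
    apply Subtype.ext
    simp [sphereMap]
  continuous_toFun := by
    apply Continuous.subtype_mk
    exact f.continuous.comp continuous_subtype_val
  continuous_invFun := by
    apply Continuous.subtype_mk
    exact f.symm.continuous.comp continuous_subtype_val

end SphAux

open SphAux in
/-- If `A` is a nonempty open proper subset of `S²`, there do not exist two distinct lines
`ℓ ≠ ℓ'` through the origin such that `A` is invariant under every rotation of `S²` about `ℓ`
and also under every rotation about `ℓ'`. -/
theorem stmt_10 (A : Set S2) (hA : IsOpen A) (hne : A.Nonempty) (hproper : A ≠ univ) :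
    ¬ ∃ ℓ ℓ' : Submodule ℝ E3, IsLine ℓ ∧ IsLine ℓ' ∧ ℓ ≠ ℓ' ∧
      (∀ τ : E3 ≃ₗᵢ[ℝ] E3, IsRotation τ → FixesAxis τ ℓ → sphereMap τ '' A = A) ∧
      (∀ τ : E3 ≃ₗᵢ[ℝ] E3, IsRotation τ → FixesAxis τ ℓ' → sphereMap τ '' A = A) := by
  rintro ⟨ℓ, ℓ', hl, hl', hll', hinvU, hinvW⟩
  obtain ⟨u, hu, hlu⟩ := exists_unit_span ℓ hl
  obtain ⟨w, hw, hlw⟩ := exists_unit_span ℓ' hl'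
  -- the two axes are genuinely distinct
  have ht2 : dot u w ^ 2 < 1 := by
    rcases lt_or_ge (dot u w ^ 2) 1 with h | h
    · exact h
    · exfalso
      have hle : dot u w ^ 2 ≤ 1 := by
        have := cs_dot hu hw
        nlinarith [sq_abs (dot u w), abs_nonneg (dot u w)]
      have heq : dot u w ^ 2 = 1 := le_antisymm hle h
      have hdep := dep_of_t2 u w hu hw heq
      apply hll'
      rw [hlu, hlw, hdep]
      exact (Submodule.span_singleton_smul_eq
        (isUnit_iff_ne_zero.mpr (by intro h0; rw [h0] at heq; norm_num at heq)) u).symm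
  -- frontier of A
  set F : Set S2 := frontier A with hFdef
  -- S2 is connected
  have hconn : ConnectedSpace S2 := by
    apply Subtype.connectedSpace
    have hrank : 1 < Module.rank ℝ E3 := by
      rw [← Module.finrank_eq_rank, finrank_euclideanSpace_fin]
      norm_num
    exact isConnected_sphere hrank 0 zero_le_one
  have hFne : F.Nonempty := by
    rw [hFdef]
    by_contra hemp
    rw [Set.not_nonempty_iff_eq_empty] at hemp
    have hclop : IsClopen A := isClopen_iff_frontier_eq_empty.mpr hemp
    rcases isClopen_iff.mp hclop with h | h
    · exact hne.ne_empty h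
    · exact hproper h
  -- invariance of F under the relevant rotations
  have hFinvU : ∀ c s : ℝ, ∀ hcs : c^2 + s^2 = 1,
      sphereMap (rotLIE u c s hu hcs) '' F = F := by
    intro c s hcs
    have hrot : IsRotation (rotLIE u c s hu hcs) := rotLIE_det u c s hu hcs
    have hfix : FixesAxis (rotLIE u c s hu hcs) ℓ := by
      intro v hv
      rw [hlu, Submodule.mem_span_singleton] at hv
      obtain ⟨r, rfl⟩ := hv
      rw [map_smul, rotLIE_apply, rot_fix u c s hu]
    have hAinv := hinvU _ hrot hfix
    have := (sphHomeo (rotLIE u c s hu hcs)).image_frontier A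
    rw [show ⇑(sphHomeo (rotLIE u c s hu hcs)) = sphereMap (rotLIE u c s hu hcs) from rfl,
      hAinv] at this
    rw [hFdef]; exact this
  have hFinvW : ∀ c s : ℝ, ∀ hcs : c^2 + s^2 = 1,
      sphereMap (rotLIE w c s hw hcs) '' F = F := by
    intro c s hcs
    have hrot : IsRotation (rotLIE w c s hw hcs) := rotLIE_det w c s hw hcs
    have hfix : FixesAxis (rotLIE w c s hw hcs) ℓ' := by
      intro v hv
      rw [hlw, Submodule.mem_span_singleton] at hv
      obtain ⟨r, rfl⟩ := hv
      rw [map_smul, rotLIE_apply, rot_fix w c s hw]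
    have hAinv := hinvW _ hrot hfix
    have := (sphHomeo (rotLIE w c s hw hcs)).image_frontier A
    rw [show ⇑(sphHomeo (rotLIE w c s hw hcs)) = sphereMap (rotLIE w c s hw hcs) from rfl,
      hAinv] at this
    rw [hFdef]; exact this
  -- transfer to a closed subset of the metric sphere in E3
  set B : Set E3 := Subtype.val '' F with hBdef
  have hBs : B ⊆ Metric.sphere 0 1 := by
    rintro x ⟨y, hy, rfl⟩
    exact y.2
  have hBc : IsClosed B :=
    ((Metric.isClosed_sphere (x := (0:E3)) (ε := 1)).isClosedEmbedding_subtypeVal).isClosedMap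
      _ isClosed_frontier
  have hBne : B.Nonempty := hFne.image _
  have hBu : ∀ c s : ℝ, c^2 + s^2 = 1 → ∀ x ∈ B, rotFun u c s x ∈ B := by
    intro c s hcs x hx
    obtain ⟨y, hyF, rfl⟩ := hx
    have : sphereMap (rotLIE u c s hu hcs) y ∈ F := by
      rw [← hFinvU c s hcs]; exact ⟨y, hyF, rfl⟩
    refine ⟨sphereMap (rotLIE u c s hu hcs) y, this, ?_⟩
    show ((rotLIE u c s hu hcs) (y : E3) : E3) = rotFun u c s (y : E3)
    rw [rotLIE_apply]
  have hBw : ∀ c s : ℝ, c^2 + s^2 = 1 → ∀ x ∈ B, rotFun w c s x ∈ B := by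
    intro c s hcs x hx
    obtain ⟨y, hyF, rfl⟩ := hx
    have : sphereMap (rotLIE w c s hw hcs) y ∈ F := by
      rw [← hFinvW c s hcs]; exact ⟨y, hyF, rfl⟩
    refine ⟨sphereMap (rotLIE w c s hw hcs) y, this, ?_⟩
    show ((rotLIE w c s hw hcs) (y : E3) : E3) = rotFun w c s (y : E3)
    rw [rotLIE_apply]
  -- the frontier is everything
  have hall := main_closed u w hu hw ht2 B hBc hBs hBne hBu hBw
  have hFuniv : F = univ := by
    rw [eq_univ_iff_forall]
    intro z
    have hz : (z : E3) ∈ B := hall (z : E3) (dot_self_sphere z.2)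
    obtain ⟨y, hyF, hyz⟩ := hz
    have : y = z := Subtype.ext hyz
    rw [← this]; exact hyF
  -- contradiction with A open nonempty
  obtain ⟨x, hxA⟩ := hne
  have hxF : x ∈ F := by rw [hFuniv]; trivial
  rw [hFdef, hA.frontier_eq] at hxF
  exact hxF.2 hxA

end
end

section
/- Let σ_1,…,σ_m̄ be rotations of S² of infinite order and τ'_{m̄+1},…,τ'_m rotations of S² of order 4 such that the group G' of rotations they generate is the internal free product of the cyclic groups ⟨σ_i⟩ and ⟨τ'_i⟩. Let ζ be the antipodal map of S² (x ↦ −x), set τ_i = ζ ∘ τ'_i, and let G be the group of isometries of S² generated by the σ_i and the τ_i. Then the assignment σ_i ↦ σ_i, τ'_i ↦ τ_i extends to a group isomorphism from G' onto G, and every element of G whose image under the homomorphism G → ℤ/2ℤ sending each σ_i to 0 and each τ_i to 1 is nonzero has no fixed point on S². -/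
/-- Relations making the generators `i` with `mb ≤ i` have order dividing 4 (and no relations
on the others): the presented group is the free product of `mb` copies of `ℤ` and `m - mb`
copies of `ℤ/4ℤ`. -/
def PRels (m mb : ℕ) : Set (FreeGroup (Fin m)) :=
  {x | ∃ i : Fin m, mb ≤ (i : ℕ) ∧ x = FreeGroup.of i ^ 4}

noncomputable section
namespace Aux13

open scoped RealInnerProductSpace Matrix

theorem exists_fixed (u : E3 ≃ₗᵢ[ℝ] E3)
    (hdet : LinearMap.det (u.toLinearEquiv : E3 →ₗ[ℝ] E3) = 1) :
    ∃ y : E3, y ≠ 0 ∧ u y = y := by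
  set A : E3 →ₗ[ℝ] E3 := (u.toLinearEquiv : E3 →ₗ[ℝ] E3) with hA
  set M : Matrix (Fin 3) (Fin 3) ℝ := Matrix.toEuclideanLin.symm A with hMdef
  have hM : Matrix.toEuclideanLin M = A := Matrix.toEuclideanLin.apply_symm_apply A
  have hadj : LinearMap.adjoint A = (u.symm.toLinearEquiv : E3 →ₗ[ℝ] E3) := by
    symm
    rw [LinearMap.eq_adjoint_iff]
    intro z w
    calc ⟪u.symm z, w⟫ = ⟪u (u.symm z), u w⟫ := (u.inner_map_map _ _).symm
    _ = ⟪z, A w⟫ := by rw [u.apply_symm_apply]; rfl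
  have hMT : Matrix.toEuclideanLin Mᵀ = (u.symm.toLinearEquiv : E3 →ₗ[ℝ] E3) := by
    have : Mᴴ = Mᵀ := by
      ext i j; simp [Matrix.conjTranspose_apply]
    rw [← this, Matrix.toEuclideanLin_conjTranspose_eq_adjoint, hM, hadj]
  have hMMT : M * Mᵀ = 1 := by
    apply Matrix.toEuclideanLin.injective
    have : Matrix.toEuclideanLin (M * Mᵀ) =
        (Matrix.toEuclideanLin M) ∘ₗ (Matrix.toEuclideanLin Mᵀ) := by
      rw [Matrix.toEuclideanLin_eq_toLin, Matrix.toLin_mul _ (PiLp.basisFun 2 ℝ (Fin 3)) _]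
    rw [this, hM, hMT]
    rw [show Matrix.toEuclideanLin (1 : Matrix (Fin 3) (Fin 3) ℝ) = LinearMap.id by
      rw [Matrix.toEuclideanLin_eq_toLin, Matrix.toLin_one]]
    refine LinearMap.ext fun z => ?_
    exact u.apply_symm_apply z
  have hdetM : M.det = 1 := by
    have : M = LinearMap.toMatrix (PiLp.basisFun 2 ℝ (Fin 3)) (PiLp.basisFun 2 ℝ (Fin 3)) A := by
      apply Matrix.toEuclideanLin.injective
      rw [hM, Matrix.toEuclideanLin_eq_toLin, Matrix.toLin_toMatrix]
    rw [this, LinearMap.det_toMatrix, ← hdet]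
  have hdet0 : (M - 1).det = 0 := by
    have h1 : M - 1 = M * (1 - Mᵀ) := by
      rw [Matrix.mul_sub, Matrix.mul_one, hMMT]
    have h2 : (M - 1).det = -(M - 1).det := by
      calc (M - 1).det = M.det * (1 - Mᵀ).det := by rw [h1, Matrix.det_mul]
      _ = ((1 - M)ᵀ).det := by rw [hdetM, one_mul, Matrix.transpose_sub, Matrix.transpose_one]
      _ = (1 - M).det := Matrix.det_transpose _
      _ = (-(M - 1)).det := by rw [neg_sub]
      _ = -(M - 1).det := by rw [Matrix.det_neg]; norm_num
    linarith
  obtain ⟨v, hv0, hv⟩ := (Matrix.exists_mulVec_eq_zero_iff).mpr hdet0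
  have hMv : M *ᵥ v = v := by
    have := hv
    rwa [Matrix.sub_mulVec, Matrix.one_mulVec, sub_eq_zero] at this
  refine ⟨(WithLp.equiv 2 (Fin 3 → ℝ)).symm v, ?_, ?_⟩
  · simpa using hv0
  · have : u ((WithLp.equiv 2 (Fin 3 → ℝ)).symm v) =
        Matrix.toEuclideanLin M ((WithLp.equiv 2 (Fin 3 → ℝ)).symm v) := by rw [hM]; rfl
    rw [this]; exact congrArg (WithLp.equiv 2 (Fin 3 → ℝ)).symm hMv

theorem rot_fix (u : E3 ≃ₗᵢ[ℝ] E3) (y : E3) (hy0 : y ≠ 0) (huy : u y = y)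
    (x : E3) (hx : ‖x‖ = 1) (hux : u x = -x) : u * u = 1 := by
  set y1 : E3 := ‖y‖⁻¹ • y with hy1def
  have huy1 : u y1 = y1 := by rw [hy1def, map_smul, huy]
  have hy1 : ‖y1‖ = 1 := norm_smul_inv_norm hy0
  have hxy : ⟪x, y1⟫ = 0 := by
    have h := u.inner_map_map x y1
    rw [hux, huy1, inner_neg_left] at h
    linarith
  have hxx : ⟪x, x⟫ = 1 := by
    rw [real_inner_self_eq_norm_mul_norm, hx]; norm_num
  have hyy : ⟪y1, y1⟫ = 1 := by
    rw [real_inner_self_eq_norm_mul_norm, hy1]; norm_num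
  have hdot : ∀ a b : E3, ⟪a, b⟫ =
      dotProduct (WithLp.equiv 2 (Fin 3 → ℝ) a) (WithLp.equiv 2 (Fin 3 → ℝ) b) := by
    intro a b
    rw [PiLp.inner_apply]
    simp [dotProduct, mul_comm]
  set w0 : E3 := (WithLp.equiv 2 (Fin 3 → ℝ)).symm
      (crossProduct (WithLp.equiv 2 (Fin 3 → ℝ) x) (WithLp.equiv 2 (Fin 3 → ℝ) y1)) with hw0def
  have hw0' : WithLp.equiv 2 (Fin 3 → ℝ) w0 =
      crossProduct (WithLp.equiv 2 (Fin 3 → ℝ) x) (WithLp.equiv 2 (Fin 3 → ℝ) y1) := by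
    rw [hw0def]; simp
  have hxw : ⟪x, w0⟫ = 0 := by rw [hdot, hw0']; exact dot_self_cross _ _
  have hyw : ⟪y1, w0⟫ = 0 := by rw [hdot, hw0']; exact dot_cross_self _ _
  have hww : ⟪w0, w0⟫ = 1 := by
    rw [hdot, hw0', cross_dot_cross]
    rw [hdot] at hxx hyy hxy
    rw [dotProduct_comm (WithLp.equiv 2 (Fin 3 → ℝ) y1) (WithLp.equiv 2 (Fin 3 → ℝ) x),
      hxx, hyy, hxy]
    ring
  have hwn : ‖w0‖ = 1 := by
    have h := hww
    rw [real_inner_self_eq_norm_mul_norm] at h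
    rcases mul_self_eq_one_iff.mp h with h' | h'
    · exact h'
    · nlinarith [norm_nonneg w0]
  have hB : Orthonormal ℝ ![x, y1, w0] := by
    rw [orthonormal_iff_ite]
    intro i j
    fin_cases i <;> fin_cases j <;>
      simp [hxx, hyy, hww, hxy, hxw, hyw, real_inner_comm x y1, real_inner_comm x w0,
        real_inner_comm y1 w0, hx, hy1, hwn]
  have hspan : Submodule.span ℝ (Set.range ![x, y1, w0]) = ⊤ := by
    apply hB.linearIndependent.span_eq_top_of_card_eq_finrank
    simp [finrank_euclideanSpace_fin]
  have horto : ∀ v : E3, ⟪x, v⟫ = 0 → ⟪y1, v⟫ = 0 → ⟪w0, v⟫ = 0 → v = 0 := by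
    intro v h1 h2 h3
    have hv : v ∈ (Submodule.span ℝ (Set.range ![x, y1, w0]))ᗮ := by
      rw [Submodule.mem_orthogonal]
      intro z hz
      induction hz using Submodule.span_induction with
      | mem z hz =>
        obtain ⟨i, rfl⟩ := hz
        fin_cases i <;> simpa using (by assumption)
      | zero => simp
      | add a b _ _ ha hb => rw [inner_add_left, ha, hb, add_zero]
      | smul c a _ ha => rw [inner_smul_left, ha, mul_zero]
    rw [hspan, Submodule.top_orthogonal_eq_bot] at hv
    simpa using hv
  set c : ℝ := ⟪w0, u w0⟫ with hcdef
  have hxm : ⟪x, u w0⟫ = 0 := by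
    have h1 : ⟪u x, u w0⟫ = ⟪x, w0⟫ := u.inner_map_map x w0
    rw [hux, inner_neg_left, hxw] at h1
    linarith
  have hym : ⟪y1, u w0⟫ = 0 := by
    have h1 : ⟪u y1, u w0⟫ = ⟪y1, w0⟫ := u.inner_map_map y1 w0
    rwa [huy1, hyw] at h1
  have hc : u w0 = c • w0 := by
    have h0 := horto (u w0 - c • w0) ?_ ?_ ?_
    · rwa [sub_eq_zero] at h0
    · rw [inner_sub_right, inner_smul_right, hxm, hxw, mul_zero, sub_zero]
    · rw [inner_sub_right, inner_smul_right, hym, hyw, mul_zero, sub_zero]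
    · rw [inner_sub_right, inner_smul_right, hww, mul_one, ← hcdef, sub_self]
  have hc2 : c ^ 2 = 1 := by
    have h1 : ‖u w0‖ = ‖w0‖ := u.norm_map w0
    rw [hc, norm_smul, hwn] at h1
    have : |c| = 1 := by simpa using h1
    calc c ^ 2 = |c| ^ 2 := (sq_abs c).symm
    _ = 1 := by rw [this]; norm_num
  have h2x : u (u x) = x := by rw [hux, map_neg, hux, neg_neg]
  have h2y : u (u y1) = y1 := by rw [huy1, huy1]
  have h2w : u (u w0) = w0 := by
    rw [hc, map_smul, hc, smul_smul, ← sq, hc2, one_smul]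
  have hall : ∀ z : E3, u (u z) = z := by
    intro z
    have hz : z ∈ Submodule.span ℝ (Set.range ![x, y1, w0]) := by rw [hspan]; trivial
    induction hz using Submodule.span_induction with
    | mem z hz =>
      obtain ⟨i, rfl⟩ := hz
      fin_cases i <;> simpa using (by assumption)
    | zero => simp
    | add a b _ _ ha hb => rw [map_add, map_add, ha, hb]
    | smul t a _ ha => rw [map_smul, map_smul, ha]
  exact LinearIsometryEquiv.ext fun z => hall z

theorem sq_eq_one (u : E3 ≃ₗᵢ[ℝ] E3)
    (hdet : LinearMap.det (u.toLinearEquiv : E3 →ₗ[ℝ] E3) = 1)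
    (x : E3) (hx : ‖x‖ = 1) (hux : u x = -x) : u * u = 1 := by
  obtain ⟨y, hy0, huy⟩ := exists_fixed u hdet
  exact rot_fix u y hy0 huy x hx hux


def detHom : (E3 ≃ₗᵢ[ℝ] E3) →* ℝˣ where
  toFun a := LinearEquiv.det a.toLinearEquiv
  map_one' := by
    show LinearEquiv.det (1 : E3 ≃ₗᵢ[ℝ] E3).toLinearEquiv = 1
    have : (1 : E3 ≃ₗᵢ[ℝ] E3).toLinearEquiv = 1 := rfl
    rw [this, map_one]
  map_mul' a b := by
    show LinearEquiv.det _ = LinearEquiv.det _ * LinearEquiv.det _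
    have : (a * b).toLinearEquiv = a.toLinearEquiv * b.toLinearEquiv := rfl
    rw [this, map_mul]

theorem detHom_coe (a : E3 ≃ₗᵢ[ℝ] E3) :
    ((detHom a : ℝˣ) : ℝ) = LinearMap.det (a.toLinearEquiv : E3 →ₗ[ℝ] E3) :=
  LinearEquiv.coe_det _

theorem detHom_zeta (zeta : E3 ≃ₗᵢ[ℝ] E3) (hzeta : ∀ x : E3, zeta x = -x) :
    ((detHom zeta : ℝˣ) : ℝ) = -1 := by
  have h : (zeta.toLinearEquiv : E3 →ₗ[ℝ] E3) = (-1 : ℝ) • LinearMap.id :=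
    LinearMap.ext fun z => by simp [hzeta z]
  rw [detHom_coe, h, LinearMap.det_smul, LinearMap.det_id, finrank_euclideanSpace_fin]
  norm_num

variable {m mb : ℕ}

/-- The lift of a generator assignment with fourth powers trivial beyond `mb`. -/
def psi (F : Fin m → (E3 ≃ₗᵢ[ℝ] E3)) (hF : ∀ i : Fin m, mb ≤ (i : ℕ) → F i ^ 4 = 1) :
    PresentedGroup (PRels m mb) →* (E3 ≃ₗᵢ[ℝ] E3) :=
  PresentedGroup.toGroup (by rintro r ⟨i, hi, rfl⟩; rw [map_pow, FreeGroup.lift_apply_of]; exact hF i hi)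

theorem psi_of (F : Fin m → (E3 ≃ₗᵢ[ℝ] E3)) (hF : ∀ i : Fin m, mb ≤ (i : ℕ) → F i ^ 4 = 1)
    (i : Fin m) : psi F hF (PresentedGroup.of i) = F i :=
  PresentedGroup.toGroup.of _

theorem psi_range (F : Fin m → (E3 ≃ₗᵢ[ℝ] E3)) (hF : ∀ i : Fin m, mb ≤ (i : ℕ) → F i ^ 4 = 1) :
    (psi F hF).range = Subgroup.closure (Set.range F) := by
  rw [MonoidHom.range_eq_map, ← PresentedGroup.closure_range_of (PRels m mb),
    MonoidHom.map_closure]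
  congr 1
  rw [← Set.range_comp]
  exact congrArg Set.range (funext fun i => psi_of F hF i)

/-- The `ℤ/4`-grading of the free product. -/
def chi4 (m mb : ℕ) : PresentedGroup (PRels m mb) →* Multiplicative (ZMod 4) :=
  PresentedGroup.toGroup (rels := PRels m mb)
    (f := fun i : Fin m => Multiplicative.ofAdd (if (i : ℕ) < mb then (0 : ZMod 4) else 1))
    (by
      rintro r ⟨i, hi, rfl⟩
      rw [map_pow, FreeGroup.lift_apply_of, if_neg (not_lt.mpr hi)]
      decide)

theorem chi4_of (i : Fin m) :
    chi4 m mb (PresentedGroup.of i) = Multiplicative.ofAdd (if (i : ℕ) < mb then (0 : ZMod 4) else 1) :=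
  PresentedGroup.toGroup.of _

/-- reduction mod 2 -/
def m2 : Multiplicative (ZMod 4) →* Multiplicative (ZMod 2) :=
  AddMonoidHom.toMultiplicative ((ZMod.castHom (by norm_num : (2:ℕ) ∣ 4) (ZMod 2)).toAddMonoidHom)

/-- `ℤ/2 → {1, ζ}`. -/
def c2 (zeta : E3 ≃ₗᵢ[ℝ] E3) (hz : zeta * zeta = 1) :
    Multiplicative (ZMod 2) →* (E3 ≃ₗᵢ[ℝ] E3) where
  toFun k := if k = Multiplicative.ofAdd 1 then zeta else 1
  map_one' := by
    show (if (1 : Multiplicative (ZMod 2)) = Multiplicative.ofAdd 1 then zeta else 1) = 1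
    rw [if_neg (by decide)]
  map_mul' a b := by
    have h : ∀ k : Multiplicative (ZMod 2), k = 1 ∨ k = Multiplicative.ofAdd 1 := by decide
    rcases h a with ha | ha <;> rcases h b with hb | hb <;> subst ha <;> subst hb <;>
      simp [hz, (by decide : (Multiplicative.ofAdd (1 : ZMod 2)) *
        (Multiplicative.ofAdd (1 : ZMod 2)) = 1), (by decide :
        ¬ (1 : Multiplicative (ZMod 2)) = Multiplicative.ofAdd 1)]

theorem c2_ofAdd_one (zeta : E3 ≃ₗᵢ[ℝ] E3) (hz : zeta * zeta = 1) :
    c2 zeta hz (Multiplicative.ofAdd 1) = zeta := by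
  show (if (Multiplicative.ofAdd (1 : ZMod 2)) = Multiplicative.ofAdd 1 then zeta else 1) = zeta
  rw [if_pos rfl]

theorem c2_central (zeta : E3 ≃ₗᵢ[ℝ] E3) (hz : zeta * zeta = 1)
    (hc : ∀ a : E3 ≃ₗᵢ[ℝ] E3, zeta * a = a * zeta)
    (k : Multiplicative (ZMod 2)) (a : E3 ≃ₗᵢ[ℝ] E3) :
    c2 zeta hz k * a = a * c2 zeta hz k := by
  show (if _ then _ else _) * a = a * (if _ then _ else _)
  split
  · exact hc a
  · rw [one_mul, mul_one]

/-- `p ↦ ζ^(χ₂ p) · ψ₀ p`. -/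
def theta (F : Fin m → (E3 ≃ₗᵢ[ℝ] E3)) (hF : ∀ i : Fin m, mb ≤ (i : ℕ) → F i ^ 4 = 1)
    (zeta : E3 ≃ₗᵢ[ℝ] E3) (hz : zeta * zeta = 1)
    (hc : ∀ a : E3 ≃ₗᵢ[ℝ] E3, zeta * a = a * zeta) :
    PresentedGroup (PRels m mb) →* (E3 ≃ₗᵢ[ℝ] E3) where
  toFun p := c2 zeta hz (m2 (chi4 m mb p)) * psi F hF p
  map_one' := by simp
  map_mul' p q := by
    simp only [map_mul]
    rw [mul_assoc, ← mul_assoc (c2 zeta hz (m2 (chi4 m mb q))) (psi F hF p) (psi F hF q),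
      c2_central zeta hz hc _ (psi F hF p), mul_assoc, mul_assoc]


end Aux13
end

/-- Let `σ_i = f i` (`i < mb`) be rotations of infinite order and `τ'_i = f i` (`mb ≤ i`)
rotations of order 4 generating a group `G'` which is the (internal) free product of the
cyclic groups they generate (expressed by: any homomorphism from the abstract free product of
`mb` copies of `ℤ` and `m - mb` copies of `ℤ/4` sending the generators to the `f i` is
injective).  Let `ζ` be the antipodal map and `τ_i = ζ ∘ τ'_i`, and let `G` be the group
generated by the `σ_i` and the `τ_i`.  Then `σ_i ↦ σ_i`, `τ'_i ↦ τ_i` extends to an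
isomorphism of `G'` onto `G`, and every element of `G` sent to `1` by the homomorphism
`G → ℤ/2ℤ` with `σ_i ↦ 0`, `τ_i ↦ 1` has no fixed point on `S²`. -/
theorem stmt_13 {m : ℕ} (mb : ℕ) (hmb : mb ≤ m)
    (f : Fin m → (E3 ≃ₗᵢ[ℝ] E3))
    (hrot : ∀ i, IsRotation (f i))
    (hinf : ∀ i : Fin m, (i : ℕ) < mb → ¬ IsOfFinOrder (f i))
    (hord4 : ∀ i : Fin m, mb ≤ (i : ℕ) → orderOf (f i) = 4)
    (hfreeprod : ∀ ψ : PresentedGroup (PRels m mb) →* (E3 ≃ₗᵢ[ℝ] E3),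
      (∀ i, ψ (PresentedGroup.of i) = f i) → Function.Injective ψ)
    (zeta : E3 ≃ₗᵢ[ℝ] E3) (hzeta : ∀ x : E3, zeta x = -x)
    (g : Fin m → (E3 ≃ₗᵢ[ℝ] E3))
    (hg : ∀ i : Fin m, g i = if (i : ℕ) < mb then f i else (f i).trans zeta) :
    (∃ e : Subgroup.closure (Set.range f) ≃* Subgroup.closure (Set.range g),
      ∀ i : Fin m, e ⟨f i, Subgroup.subset_closure (Set.mem_range_self i)⟩ =
        ⟨g i, Subgroup.subset_closure (Set.mem_range_self i)⟩) ∧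
    (∀ φ : ↥(Subgroup.closure (Set.range g)) →* Multiplicative (ZMod 2),
      (∀ i : Fin m, φ ⟨g i, Subgroup.subset_closure (Set.mem_range_self i)⟩ =
        Multiplicative.ofAdd (if (i : ℕ) < mb then 0 else 1)) →
      ∀ w : Subgroup.closure (Set.range g), φ w ≠ 1 →
        ∀ x : S2, sphereMap (w : E3 ≃ₗᵢ[ℝ] E3) x ≠ x) := by
  classical
  -- ζ facts
  have hzz : zeta * zeta = 1 := LinearIsometryEquiv.ext fun z => by
    show zeta (zeta z) = z
    rw [hzeta, hzeta, neg_neg]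
  have hzc : ∀ a : E3 ≃ₗᵢ[ℝ] E3, zeta * a = a * zeta := by
    intro a
    refine LinearIsometryEquiv.ext fun z => ?_
    show zeta (a z) = a (zeta z)
    rw [hzeta, hzeta, map_neg]
  have hf4 : ∀ i : Fin m, mb ≤ (i : ℕ) → f i ^ 4 = 1 := fun i hi => by
    rw [← hord4 i hi]; exact pow_orderOf_eq_one (f i)
  have hgz : ∀ i : Fin m, mb ≤ (i : ℕ) → g i = zeta * f i := fun i hi => by
    rw [hg i, if_neg (not_lt.mpr hi)]; rfl
  have hz4 : zeta ^ 4 = 1 := by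
    have h2 : zeta ^ 2 = 1 := by rw [pow_two, hzz]
    rw [show (4 : ℕ) = 2 * 2 from rfl, pow_mul, h2, one_pow]
  have hg4 : ∀ i : Fin m, mb ≤ (i : ℕ) → g i ^ 4 = 1 := fun i hi => by
    rw [hgz i hi, (show Commute zeta (f i) from hzc (f i)).mul_pow, hz4, one_mul, hf4 i hi]
  set ψ0 := Aux13.psi (mb := mb) f hf4 with hψ0def
  set ψ1 := Aux13.psi (mb := mb) g hg4 with hψ1def
  have hψ0of : ∀ i, ψ0 (PresentedGroup.of i) = f i := Aux13.psi_of f hf4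
  have hψ1of : ∀ i, ψ1 (PresentedGroup.of i) = g i := Aux13.psi_of g hg4
  have hinj0 : Function.Injective ψ0 := hfreeprod ψ0 hψ0of
  -- ψ1 agrees with θ
  have hθ : ψ1 = Aux13.theta f hf4 zeta hzz hzc := by
    refine PresentedGroup.ext fun i => ?_
    rw [hψ1of]
    show g i = Aux13.c2 zeta hzz (Aux13.m2 (Aux13.chi4 m mb (PresentedGroup.of i))) *
      Aux13.psi f hf4 (PresentedGroup.of i)
    rw [Aux13.chi4_of, Aux13.psi_of f hf4 i]
    by_cases h : (i : ℕ) < mb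
    · rw [if_pos h]
      have h1 : Aux13.m2 (Multiplicative.ofAdd (0 : ZMod 4)) = 1 := by decide
      rw [h1, map_one (Aux13.c2 zeta hzz), one_mul, hg i, if_pos h]
    · rw [if_neg h]
      have h1 : Aux13.m2 (Multiplicative.ofAdd (1 : ZMod 4)) = Multiplicative.ofAdd 1 := by decide
      rw [h1, Aux13.c2_ofAdd_one, hgz i (not_lt.mp h)]
  -- determinant facts
  have hD0 : Aux13.detHom.comp ψ0 = 1 := by
    refine PresentedGroup.ext fun i => ?_
    show Aux13.detHom (ψ0 (PresentedGroup.of i)) = 1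
    rw [hψ0of]
    exact Units.ext (by rw [Aux13.detHom_coe]; exact hrot i)
  have hDψ0 : ∀ p, Aux13.detHom (ψ0 p) = 1 := fun p => by
    have := congrArg (fun (h : PresentedGroup (PRels m mb) →* ℝˣ) => h p) hD0
    simpa using this
  have hdz : ((Aux13.detHom zeta : ℝˣ) : ℝ) = -1 := Aux13.detHom_zeta zeta hzeta
  have hk2 : ∀ k : Multiplicative (ZMod 2), k = 1 ∨ k = Multiplicative.ofAdd 1 := by decide
  have hinj1 : Function.Injective ψ1 := by
    rw [injective_iff_map_eq_one]
    intro p hp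
    have h1 : Aux13.c2 zeta hzz (Aux13.m2 (Aux13.chi4 m mb p)) * ψ0 p = 1 := by
      rw [hθ] at hp
      exact hp
    rcases hk2 (Aux13.m2 (Aux13.chi4 m mb p)) with hk | hk
    · rw [hk, map_one, one_mul] at h1
      exact hinj0 (by rw [h1, map_one])
    · exfalso
      rw [hk, Aux13.c2_ofAdd_one] at h1
      have h2 := congrArg Aux13.detHom h1
      rw [map_mul, hDψ0 p, mul_one, map_one] at h2
      have h3 := congrArg (Units.val : ℝˣ → ℝ) h2
      rw [hdz] at h3
      norm_num at h3
  have hr0 : ψ0.range = Subgroup.closure (Set.range f) := Aux13.psi_range f hf4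
  have hr1 : ψ1.range = Subgroup.closure (Set.range g) := Aux13.psi_range g hg4
  constructor
  · -- the isomorphism
    set e0 := MonoidHom.ofInjective hinj0 with he0
    set e1 := MonoidHom.ofInjective hinj1 with he1
    refine ⟨((MulEquiv.subgroupCongr hr0.symm).trans e0.symm).trans
      (e1.trans (MulEquiv.subgroupCongr hr1)), fun i => ?_⟩
    have hmem : f i ∈ ψ0.range := ⟨PresentedGroup.of i, hψ0of i⟩
    have hs0 : (MulEquiv.subgroupCongr hr0.symm)
        ⟨f i, Subgroup.subset_closure (Set.mem_range_self i)⟩ = ⟨f i, hmem⟩ := rfl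
    have he0i : e0.symm ⟨f i, hmem⟩ = PresentedGroup.of i := by
      rw [MulEquiv.symm_apply_eq]
      exact Subtype.ext (by rw [MonoidHom.ofInjective_apply, hψ0of])
    refine Subtype.ext ?_
    show ((MulEquiv.subgroupCongr hr1) (e1 (e0.symm ((MulEquiv.subgroupCongr hr0.symm)
      ⟨f i, Subgroup.subset_closure (Set.mem_range_self i)⟩))) : E3 ≃ₗᵢ[ℝ] E3) = g i
    rw [hs0, he0i]
    have : ((e1 (PresentedGroup.of i) : ψ1.range) : E3 ≃ₗᵢ[ℝ] E3) = g i := by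
      rw [MonoidHom.ofInjective_apply, hψ1of]
    exact this
  · -- no fixed points
    intro φ hφ w hw x hfix
    have hjmem : ∀ p, ψ1 p ∈ Subgroup.closure (Set.range g) := fun p => by
      rw [← hr1]; exact ⟨p, rfl⟩
    set j : PresentedGroup (PRels m mb) →* (Subgroup.closure (Set.range g)) :=
      ψ1.codRestrict _ hjmem with hjdef
    have hφj : φ.comp j = Aux13.m2.comp (Aux13.chi4 m mb) := by
      refine PresentedGroup.ext fun i => ?_
      show φ (j (PresentedGroup.of i)) = Aux13.m2 (Aux13.chi4 m mb (PresentedGroup.of i))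
      have hji : j (PresentedGroup.of i) =
          ⟨g i, Subgroup.subset_closure (Set.mem_range_self i)⟩ :=
        Subtype.ext (hψ1of i)
      rw [hji, hφ i, Aux13.chi4_of]
      by_cases h : (i : ℕ) < mb
      · rw [if_pos h, if_pos h]
        try decide
      · rw [if_neg h, if_neg h]
        try decide
    obtain ⟨p, hp⟩ : ∃ p, ψ1 p = (w : E3 ≃ₗᵢ[ℝ] E3) := by
      have h : (w : E3 ≃ₗᵢ[ℝ] E3) ∈ ψ1.range := by rw [hr1]; exact w.2
      exact h
    have hwj : w = j p := Subtype.ext hp.symm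
    have hφw : φ w = Aux13.m2 (Aux13.chi4 m mb p) := by
      rw [hwj]
      exact DFunLike.congr_fun hφj p
    have hm2 : Aux13.m2 (Aux13.chi4 m mb p) ≠ 1 := by rw [← hφw]; exact hw
    have hodd : ∀ k : Multiplicative (ZMod 4), Aux13.m2 k ≠ 1 →
        k * k = Multiplicative.ofAdd (2 : ZMod 4) := by decide
    have hp2ne : p * p ≠ 1 := by
      intro h
      have h1 := congrArg (Aux13.chi4 m mb) h
      rw [map_mul, hodd _ hm2, map_one] at h1
      exact (by decide : Multiplicative.ofAdd (2 : ZMod 4) ≠ 1) h1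
    have hk1 : Aux13.m2 (Aux13.chi4 m mb p) = Multiplicative.ofAdd 1 := by
      rcases hk2 (Aux13.m2 (Aux13.chi4 m mb p)) with h | h
      · exact absurd h hm2
      · exact h
    have hw1 : (w : E3 ≃ₗᵢ[ℝ] E3) = zeta * ψ0 p := by
      rw [← hp, hθ]
      show Aux13.c2 zeta hzz (Aux13.m2 (Aux13.chi4 m mb p)) * Aux13.psi f hf4 p = zeta * ψ0 p
      rw [hk1, Aux13.c2_ofAdd_one]
    have hxval : (w : E3 ≃ₗᵢ[ℝ] E3) x.1 = x.1 := congrArg Subtype.val hfix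
    have hux : ψ0 p x.1 = -x.1 := by
      have h1 := hxval
      rw [hw1] at h1
      have h1' : zeta (ψ0 p x.1) = x.1 := h1
      rw [hzeta] at h1'
      exact neg_eq_iff_eq_neg.mp h1'
    have hxnorm : ‖(x : E3)‖ = 1 := by simpa [S2, mem_sphere_zero_iff_norm] using x.2
    have hdet1 : LinearMap.det ((ψ0 p).toLinearEquiv : E3 →ₗ[ℝ] E3) = 1 := by
      rw [← Aux13.detHom_coe, hDψ0 p, Units.val_one]
    have hsq : ψ0 p * ψ0 p = 1 := Aux13.sq_eq_one _ hdet1 x.1 hxnorm hux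
    exact hp2ne (hinj0 (by rw [map_mul, hsq, map_one]))
end

section
/- Let (L_i, R_i), 1 ≤ i ≤ m, be a system of proper congruences on {1,…,r}. If the system is consistent, then no closed directed walk of positive length in the digraph 𝒢 contains a bad edge. -/
open Set

/-- A vertex of the digraph `𝒢`: a nonempty proper subset of `{1,…,r}`. -/
def GVert {r : ℕ} (S : Set (Fin r)) : Prop := S.Nonempty ∧ S ≠ univ

/-- The edge relation of the labeled digraph `𝒢`: labels are pairs `(i, b)` with `b = true`
for the positive label `f i` and `b = false` for the inverse label `f i⁻¹`. -/
def GEdge {r m : ℕ} (L R : Fin m → Set (Fin r))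
    (S : Set (Fin r)) (lab : Fin m × Bool) (T : Set (Fin r)) : Prop :=
  GVert S ∧ GVert T ∧
    (if lab.2 then (L lab.1 ⊆ S ∧ T = R lab.1) ∨ ((L lab.1)ᶜ ⊆ S ∧ T = (R lab.1)ᶜ)
     else (R lab.1 ⊆ S ∧ T = L lab.1) ∨ ((R lab.1)ᶜ ⊆ S ∧ T = (L lab.1)ᶜ))

/-- A good edge of `𝒢`: its source is exactly the corresponding left (resp. right) set. -/
def GGoodEdge {r m : ℕ} (L R : Fin m → Set (Fin r))
    (S : Set (Fin r)) (lab : Fin m × Bool) (T : Set (Fin r)) : Prop :=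
  GEdge L R S lab T ∧
    (if lab.2 then (S = L lab.1 ∧ T = R lab.1) ∨ (S = (L lab.1)ᶜ ∧ T = (R lab.1)ᶜ)
     else (S = R lab.1 ∧ T = L lab.1) ∨ (S = (R lab.1)ᶜ ∧ T = (L lab.1)ᶜ))

/-- A bad edge of `𝒢`: an edge which is not good. -/
def GBadEdge {r m : ℕ} (L R : Fin m → Set (Fin r))
    (S : Set (Fin r)) (lab : Fin m × Bool) (T : Set (Fin r)) : Prop :=
  GEdge L R S lab T ∧ ¬ GGoodEdge L R S lab T

lemma edge_subcong {r m : ℕ} {L R : Fin m → Set (Fin r)} {S T : Set (Fin r)}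
    {lab : Fin m × Bool} (h : GEdge L R S lab T) : SubCong L R T S := by
  obtain ⟨_, _, h⟩ := h
  obtain ⟨i, b⟩ := lab
  cases b <;> simp only [if_true, if_false] at h
  · rcases h with ⟨hs, ht⟩ | ⟨hs, ht⟩
    · exact ht ▸ SubCong.trans (SubCong.lr i) (SubCong.subset hs)
    · exact ht ▸ SubCong.trans (SubCong.lrc i) (SubCong.subset hs)
  · rcases h with ⟨hs, ht⟩ | ⟨hs, ht⟩
    · exact ht ▸ SubCong.trans (SubCong.rl i) (SubCong.subset hs)
    · exact ht ▸ SubCong.trans (SubCong.rlc i) (SubCong.subset hs)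

lemma chain_subcong {r m : ℕ} {L R : Fin m → Set (Fin r)} {n : ℕ}
    {v : ℕ → Set (Fin r)} {e : ℕ → Fin m × Bool}
    (hwalk : ∀ j < n, GEdge L R (v j) (e j) (v (j + 1)))
    (a d : ℕ) (h : a + d ≤ n) : SubCong L R (v (a + d)) (v a) := by
  induction d with
  | zero => exact SubCong.subset (le_refl _)
  | succ d ih =>
    exact SubCong.trans (edge_subcong (hwalk (a + d) (by omega))) (ih (by omega))

/-- **Claim 1.** If a system of proper congruences is consistent, then no closed directed walk
of positive length in the digraph `𝒢` contains a bad edge. -/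
theorem stmt_17 {r m : ℕ} (L R : Fin m → Set (Fin r)) (hproper : SysProper L R)
    (hcons : SysConsistent L R)
    (n : ℕ) (hn : 0 < n) (v : ℕ → Set (Fin r)) (e : ℕ → Fin m × Bool)
    (hwalk : ∀ j < n, GEdge L R (v j) (e j) (v (j + 1)))
    (hclosed : v n = v 0) :
    ∀ j < n, ¬ GBadEdge L R (v j) (e j) (v (j + 1)) := by
  intro j hj hbad
  obtain ⟨hedge, hnotgood⟩ := hbad
  have sc1 : SubCong L R (v j) (v 0) := by
    have := chain_subcong hwalk 0 j (by omega); simpa using this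
  have sc2 : SubCong L R (v n) (v (j + 1)) := by
    have := chain_subcong hwalk (j + 1) (n - (j + 1)) (by omega)
    rwa [show j + 1 + (n - (j + 1)) = n by omega] at this
  have sc0n : SubCong L R (v 0) (v n) := SubCong.subset (hclosed ▸ le_refl _)
  have sc : SubCong L R (v j) (v (j + 1)) :=
    SubCong.trans sc1 (SubCong.trans sc0n sc2)
  obtain ⟨hv1, hv2, h⟩ := hedge
  have hgood : ¬ (if (e j).2 then
      (v j = L (e j).1 ∧ v (j+1) = R (e j).1) ∨ (v j = (L (e j).1)ᶜ ∧ v (j+1) = (R (e j).1)ᶜ)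
    else (v j = R (e j).1 ∧ v (j+1) = L (e j).1) ∨ (v j = (R (e j).1)ᶜ ∧ v (j+1) = (L (e j).1)ᶜ)) :=
    fun hg => hnotgood ⟨⟨hv1, hv2, h⟩, hg⟩
  rcases hb : (e j).2 with _ | _ <;> rw [hb] at h hgood <;>
    simp only [Bool.false_eq_true, if_true, if_false, reduceIte] at h hgood <;> push_neg at hgood
  · rcases h with ⟨hs, ht⟩ | ⟨hs, ht⟩
    · have hne : R (e j).1 ⊂ v j := HasSubset.Subset.ssubset_of_ne hs
        fun hh => (hgood.1 hh.symm) ht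
      exact hcons _ _ (SubCong.trans sc (ht ▸ SubCong.lr (e j).1)) hne
    · have hne : (R (e j).1)ᶜ ⊂ v j := HasSubset.Subset.ssubset_of_ne hs
        fun hh => (hgood.2 hh.symm) ht
      exact hcons _ _ (SubCong.trans sc (ht ▸ SubCong.lrc (e j).1)) hne
  · rcases h with ⟨hs, ht⟩ | ⟨hs, ht⟩
    · have hne : L (e j).1 ⊂ v j := HasSubset.Subset.ssubset_of_ne hs
        fun hh => (hgood.1 hh.symm) ht
      exact hcons _ _ (SubCong.trans sc (ht ▸ SubCong.rl (e j).1)) hne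
    · have hne : (L (e j).1)ᶜ ⊂ v j := HasSubset.Subset.ssubset_of_ne hs
        fun hh => (hgood.2 hh.symm) ht
      exact hcons _ _ (SubCong.trans sc (ht ▸ SubCong.rlc (e j).1)) hne
end

section
/- Let (L_i, R_i), 1 ≤ i ≤ m, be a system of proper congruences on {1,…,r} which is weak and nonredundant. Then the undirected multigraph 𝒢₀ — whose vertices are the nonempty proper subsets of {1,…,r} and which has, for each i, one edge joining L_i with R_i and one edge joining L_i^c with R_i^c — is acyclic: it contains no closed walk of positive length whose traversed edges are pairwise distinct. -/
open Set

/-- Incidence in the undirected multigraph `𝒢₀`: the edge indexed by `(i, false)` joins `L i`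
with `R i`, and the edge indexed by `(i, true)` joins `(L i)ᶜ` with `(R i)ᶜ`. -/
def G0Joins {r m : ℕ} (L R : Fin m → Set (Fin r))
    (E : Fin m × Bool) (u w : Set (Fin r)) : Prop :=
  if E.2 then (u = (L E.1)ᶜ ∧ w = (R E.1)ᶜ) ∨ (u = (R E.1)ᶜ ∧ w = (L E.1)ᶜ)
  else (u = L E.1 ∧ w = R E.1) ∨ (u = R E.1 ∧ w = L E.1)


lemma congDed_step {r m : ℕ} {L R : Fin m → Set (Fin r)}
    {S : Set (Set (Fin r) × Set (Fin r))} {E : Fin m × Bool} {u w : Set (Fin r)}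
    (hE : (L E.1, R E.1) ∈ S) (h : G0Joins L R E u w) : CongDed S u w := by
  unfold G0Joins at h
  split at h
  · rcases h with ⟨hu, hw⟩ | ⟨hu, hw⟩
    · subst hu; subst hw; exact .compl (.base hE)
    · subst hu; subst hw; exact .symm (.compl (.base hE))
  · rcases h with ⟨hu, hw⟩ | ⟨hu, hw⟩
    · subst hu; subst hw; exact .base hE
    · subst hu; subst hw; exact .symm (.base hE)

lemma congDed_path {r : ℕ} {S : Set (Set (Fin r) × Set (Fin r))} (v : ℕ → Set (Fin r))
    (a : ℕ) : ∀ b, a < b → (∀ j, a ≤ j → j < b → CongDed S (v j) (v (j+1))) →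
    CongDed S (v a) (v b) := by
  intro b
  induction b with
  | zero => omega
  | succ b ih =>
    intro hab h
    rcases Nat.lt_or_ge a b with hb | hb
    · exact .trans (ih hb fun j h1 h2 => h j h1 (by omega)) (h b (by omega) (by omega))
    · have hab' : a = b := by omega
      subst hab'
      exact h a le_rfl (by omega)

/-- **Claim 2.** If a system of proper congruences is weak and nonredundant, then the
undirected multigraph `𝒢₀` is acyclic: it has no closed walk of positive length whose
traversed edges are pairwise distinct. -/
theorem stmt_18 {r m : ℕ} (L R : Fin m → Set (Fin r)) (hproper : SysProper L R)
    (hweak : SysWeak L R) (hnonred : SysNonredundant L R) :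
    ¬ ∃ (n : ℕ) (v : ℕ → Set (Fin r)) (e : ℕ → Fin m × Bool),
        0 < n ∧
        (∀ j < n, G0Joins L R (e j) (v j) (v (j + 1))) ∧
        v n = v 0 ∧
        (∀ j < n, ∀ k < n, j ≠ k → e j ≠ e k) := by
  rintro ⟨n, v, e, hn, hjoin, hclose, hdist⟩
  set S : Set (Set (Fin r) × Set (Fin r)) := {p | ∃ i, p = (L i, R i)} with hS
  by_cases hpart : ∃ k, k < n ∧ (e k).1 = (e 0).1 ∧ (e k).2 ≠ (e 0).2
  · -- both edges of congruence (e 0).1 appear: contradiction with weakness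
    obtain ⟨k, hk, hk1, hk2⟩ := hpart
    have hfull : CongDed S (v 0) (v (k+1)) := by
      apply congDed_path v 0 (k+1) (Nat.succ_pos k)
      intro j _ hj2
      exact congDed_step ⟨(e j).1, rfl⟩ (hjoin j (by omega))
    have h0 := hjoin 0 hn
    have hkk := hjoin k hk
    have hLR : CongDed S (L (e 0).1) (R (e 0).1) := .base ⟨(e 0).1, rfl⟩
    have key : ∀ A B : Set (Fin r), (A = L (e 0).1 ∨ A = R (e 0).1) →
        (B = L (e 0).1 ∨ B = R (e 0).1) → CongDed S A Bᶜ → False := by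
      intro A B hA hB hAB
      have hBA : CongDed S B A := by
        rcases hB with rfl | rfl <;> rcases hA with rfl | rfl
        · exact .trans hLR (.symm hLR)
        · exact hLR
        · exact .symm hLR
        · exact .trans (.symm hLR) hLR
      exact hweak B (.trans hBA hAB)
    cases hb0 : (e 0).2 with
    | false =>
      have hbk : (e k).2 = true := by
        cases hbk : (e k).2
        · rw [hb0, hbk] at hk2; exact absurd rfl hk2
        · rfl
      rw [G0Joins, hb0] at h0
      rw [G0Joins, hbk] at hkk
      simp only [if_true, if_false, Bool.false_eq_true] at h0 hkk
      rw [hk1] at hkk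
      rcases h0 with ⟨h01, _⟩ | ⟨h01, _⟩ <;> rcases hkk with ⟨_, hk3⟩ | ⟨_, hk3⟩ <;>
        rw [h01, hk3] at hfull
      · exact key _ _ (Or.inl rfl) (Or.inr rfl) hfull
      · exact key _ _ (Or.inl rfl) (Or.inl rfl) hfull
      · exact key _ _ (Or.inr rfl) (Or.inr rfl) hfull
      · exact key _ _ (Or.inr rfl) (Or.inl rfl) hfull
    | true =>
      have hbk : (e k).2 = false := by
        cases hbk : (e k).2
        · rfl
        · rw [hb0, hbk] at hk2; exact absurd rfl hk2
      rw [G0Joins, hb0] at h0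
      rw [G0Joins, hbk] at hkk
      simp only [if_true, if_false, Bool.false_eq_true] at h0 hkk
      rw [hk1] at hkk
      rcases h0 with ⟨h01, _⟩ | ⟨h01, _⟩ <;> rcases hkk with ⟨_, hk3⟩ | ⟨_, hk3⟩ <;>
        rw [h01, hk3] at hfull
      · exact key _ _ (Or.inr rfl) (Or.inl rfl) (.symm hfull)
      · exact key _ _ (Or.inl rfl) (Or.inl rfl) (.symm hfull)
      · exact key _ _ (Or.inr rfl) (Or.inr rfl) (.symm hfull)
      · exact key _ _ (Or.inl rfl) (Or.inr rfl) (.symm hfull)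
  · -- only one edge of congruence (e 0).1 appears
    push_neg at hpart
    rcases Nat.lt_or_ge n 2 with hn2 | hn2
    · -- n = 1 : loop, gives L i = R i
      have hn1 : n = 1 := by omega
      subst hn1
      have h0 := hjoin 0 hn
      rw [hclose] at h0
      apply hnonred.2 (e 0).1
      cases hb0 : (e 0).2 <;> rw [G0Joins, hb0] at h0 <;>
        simp only [if_true, if_false, Bool.false_eq_true] at h0
      · rcases h0 with ⟨h1, h2⟩ | ⟨h1, h2⟩
        · rw [← h1, ← h2]
        · rw [← h1, ← h2]
      · rcases h0 with ⟨h1, h2⟩ | ⟨h1, h2⟩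
        · have : (L (e 0).1)ᶜ = (R (e 0).1)ᶜ := by rw [← h1, ← h2]
          exact compl_injective this
        · have : (L (e 0).1)ᶜ = (R (e 0).1)ᶜ := by rw [← h1, ← h2]
          exact compl_injective this
    · -- n ≥ 2 : rest of cycle deduces (L i, R i) without congruence i
      have hidx : ∀ j, 1 ≤ j → j < n → (e j).1 ≠ (e 0).1 := by
        intro j h1 h2 hcon
        have hb := hpart j h2 hcon
        have hej : e j = e 0 := Prod.ext hcon hb
        exact hdist j h2 0 hn (by omega) hej
      have hpath : CongDed {p | ∃ j, j ≠ (e 0).1 ∧ p = (L j, R j)} (v 1) (v n) :=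
        congDed_path v 1 n (by omega)
          (fun j hj1 hj2 => congDed_step ⟨(e j).1, hidx j hj1 hj2, rfl⟩ (hjoin j hj2))
      rw [hclose] at hpath
      apply hnonred.1 (e 0).1
      have h0 := hjoin 0 hn
      cases hb0 : (e 0).2 <;> rw [G0Joins, hb0] at h0 <;>
        simp only [if_true, if_false, Bool.false_eq_true] at h0
      · rcases h0 with ⟨h1, h2⟩ | ⟨h1, h2⟩
        · rw [h1, h2] at hpath; exact .symm hpath
        · rw [h1, h2] at hpath; exact hpath
      · rcases h0 with ⟨h1, h2⟩ | ⟨h1, h2⟩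
        · rw [h1, h2] at hpath
          have := CongDed.compl (CongDed.symm hpath)
          rwa [compl_compl, compl_compl] at this
        · rw [h1, h2] at hpath
          have := CongDed.compl hpath
          rwa [compl_compl, compl_compl] at this
end

section
/- Let (L_i, R_i), 1 ≤ i ≤ m, be a system of proper congruences on {1,…,r} which is weak, consistent, and nonredundant. Then every directed walk of length 2^r in the digraph 𝒢 contains two consecutive edges that traverse a good 2-cycle: there is an index i and a pair of vertices (U, V) with (U, V) = (L_i, R_i) or (U, V) = (L_i^c, R_i^c) such that one of the two consecutive edges is the good edge U → V with positive label i and the other is the good edge V → U with inverse label i. -/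
open Set

section Helpers
variable {r m : ℕ} {L R : Fin m → Set (Fin r)}

lemma edge_sub {S T : Set (Fin r)} {lab : Fin m × Bool}
    (h : GEdge L R S lab T) : SubCong L R T S := by
  obtain ⟨_, _, h3⟩ := h
  rcases lab with ⟨i, b⟩
  cases b <;> simp only [Bool.false_eq_true, if_false, if_true] at h3 <;>
    rcases h3 with ⟨h1, h2⟩ | ⟨h1, h2⟩ <;> subst h2
  · exact (SubCong.lr i).trans (SubCong.subset h1)
  · exact (SubCong.lrc i).trans (SubCong.subset h1)
  · exact (SubCong.rl i).trans (SubCong.subset h1)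
  · exact (SubCong.rlc i).trans (SubCong.subset h1)

lemma good_of_sub (hcons : SysConsistent L R) {S T : Set (Fin r)} {lab : Fin m × Bool}
    (h : GEdge L R S lab T) (hs : SubCong L R S T) : GGoodEdge L R S lab T := by
  refine ⟨h, ?_⟩
  obtain ⟨_, _, h3⟩ := h
  rcases lab with ⟨i, b⟩
  cases b <;> simp only [Bool.false_eq_true, if_false, if_true] at h3 ⊢ <;>
    rcases h3 with ⟨h1, h2⟩ | ⟨h1, h2⟩ <;> subst h2
  · rcases h1.ssubset_or_eq with hss | heq
    · exact absurd hss (hcons _ _ (hs.trans (SubCong.lr i)))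
    · exact Or.inl ⟨heq.symm, rfl⟩
  · rcases h1.ssubset_or_eq with hss | heq
    · exact absurd hss (hcons _ _ (hs.trans (SubCong.lrc i)))
    · exact Or.inr ⟨heq.symm, rfl⟩
  · rcases h1.ssubset_or_eq with hss | heq
    · exact absurd hss (hcons _ _ (hs.trans (SubCong.rl i)))
    · exact Or.inl ⟨heq.symm, rfl⟩
  · rcases h1.ssubset_or_eq with hss | heq
    · exact absurd hss (hcons _ _ (hs.trans (SubCong.rlc i)))
    · exact Or.inr ⟨heq.symm, rfl⟩

lemma good_cases {S T : Set (Fin r)} {lab : Fin m × Bool}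
    (h : GGoodEdge L R S lab T) :
    (S = L lab.1 ∧ T = R lab.1 ∧ lab.2 = true) ∨ (S = R lab.1 ∧ T = L lab.1 ∧ lab.2 = false) ∨
    (S = (L lab.1)ᶜ ∧ T = (R lab.1)ᶜ ∧ lab.2 = true) ∨
    (S = (R lab.1)ᶜ ∧ T = (L lab.1)ᶜ ∧ lab.2 = false) := by
  obtain ⟨-, h2⟩ := h
  obtain ⟨i, b⟩ := lab
  cases b <;> simp only [Bool.false_eq_true, if_false, if_true] at h2 <;> tauto

lemma good_cong {P : Set (Set (Fin r) × Set (Fin r))} {S T : Set (Fin r)} {lab : Fin m × Bool}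
    (hP : (L lab.1, R lab.1) ∈ P) (h : GGoodEdge L R S lab T) : CongDed P S T := by
  rcases good_cases h with ⟨h1, h2, -⟩ | ⟨h1, h2, -⟩ | ⟨h1, h2, -⟩ | ⟨h1, h2, -⟩ <;>
      subst h1 <;> subst h2
  · exact .base hP
  · exact .symm (.base hP)
  · exact .compl (.base hP)
  · exact .symm (.compl (.base hP))

lemma chain_sub {v : ℕ → Set (Fin r)} {e : ℕ → Fin m × Bool} {N : ℕ}
    (hwalk : ∀ j < N, GEdge L R (v j) (e j) (v (j + 1))) :
    ∀ c d, c ≤ d → d ≤ N → SubCong L R (v d) (v c) := by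
  intro c d hcd hdN
  induction d with
  | zero => exact (Nat.le_zero.mp hcd) ▸ SubCong.subset subset_rfl
  | succ n ih =>
    rcases Nat.eq_or_lt_of_le hcd with heq | hlt
    · exact heq ▸ SubCong.subset subset_rfl
    · exact (edge_sub (hwalk n hdN)).trans
        (ih (Nat.lt_succ_iff.mp hlt) (Nat.le_of_succ_le hdN))

lemma walk_cong {P : Set (Set (Fin r) × Set (Fin r))} {v : ℕ → Set (Fin r)}
    {e : ℕ → Fin m × Bool} {s : ℕ} :
    ∀ t, s < t →
    (∀ c, s ≤ c → c < t → GGoodEdge L R (v c) (e c) (v (c + 1)) ∧ (L (e c).1, R (e c).1) ∈ P) →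
    CongDed P (v s) (v t) := by
  intro t
  induction t with
  | zero => omega
  | succ n ih =>
    intro hst hg
    rcases Nat.eq_or_lt_of_le (Nat.succ_le_of_lt hst) with heq | hlt
    · obtain ⟨hgood, hmem⟩ := hg s le_rfl (by omega)
      have hn : n = s := by omega
      subst hn
      exact good_cong (L := L) (R := R) hmem hgood
    · have h1 : CongDed P (v s) (v n) := ih (by omega) (fun c hc hc' => hg c hc (by omega))
      obtain ⟨hgood, hmem⟩ := hg n (by omega) (by omega)
      exact h1.trans (good_cong (L := L) (R := R) hmem
        hgood)

end Helpers


/-- **Claim 3.** If a system of proper congruences is weak, consistent, and nonredundant, then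
every directed walk of length `2 ^ r` in the digraph `𝒢` contains a pair of consecutive edges
traversing a good 2-cycle: for some `i` and `(U, V) = (L i, R i)` or `((L i)ᶜ, (R i)ᶜ)`, one
of the two consecutive edges is the good edge `U → V` with positive label `i` and the other is
the good edge `V → U` with inverse label `i`. -/
theorem stmt_19 {r m : ℕ} (L R : Fin m → Set (Fin r)) (hproper : SysProper L R)
    (hweak : SysWeak L R) (hcons : SysConsistent L R) (hnonred : SysNonredundant L R)
    (v : ℕ → Set (Fin r)) (e : ℕ → Fin m × Bool)
    (hwalk : ∀ j < 2 ^ r, GEdge L R (v j) (e j) (v (j + 1))) :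
    ∃ j, j + 1 < 2 ^ r ∧ ∃ (i : Fin m) (U V : Set (Fin r)),
      ((U = L i ∧ V = R i) ∨ (U = (L i)ᶜ ∧ V = (R i)ᶜ)) ∧
      ((v j = U ∧ e j = (i, true) ∧ v (j + 1) = V ∧
          e (j + 1) = (i, false) ∧ v (j + 2) = U) ∨
       (v j = V ∧ e j = (i, false) ∧ v (j + 1) = U ∧
          e (j + 1) = (i, true) ∧ v (j + 2) = V)) := by
  by_contra hcon
  -- pigeonhole: some repeated vertex
  have hex : ∃ d, 0 < d ∧ ∃ a, a + d ≤ 2 ^ r ∧ v a = v (a + d) := by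
    have hni : ¬ Function.Injective (fun k : Fin (2 ^ r + 1) => v k) := by
      intro hinj
      have := Fintype.card_le_of_injective _ hinj
      simp at this
    rw [Function.not_injective_iff] at hni
    obtain ⟨x, y, hxy, hne⟩ := hni
    have hx := x.isLt
    have hy := y.isLt
    rcases Nat.lt_or_ge (x : ℕ) (y : ℕ) with h | h
    · refine ⟨(y : ℕ) - x, by omega, (x : ℕ), ?_, ?_⟩
      · omega
      · rw [show (x : ℕ) + ((y : ℕ) - (x : ℕ)) = (y : ℕ) from by omega]; exact hxy
    · have h' : (y : ℕ) < x := by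
        rcases Nat.lt_or_ge (y : ℕ) (x : ℕ) with h' | h'
        · exact h'
        · exact absurd (Fin.ext (by omega)) hne
      refine ⟨(x : ℕ) - y, by omega, (y : ℕ), ?_, ?_⟩
      · omega
      · rw [show (y : ℕ) + ((x : ℕ) - (y : ℕ)) = (x : ℕ) from by omega]; exact hxy.symm
  classical
  obtain ⟨d, ⟨hd0, a, hab, heq⟩, hmind⟩ :
      ∃ d, (0 < d ∧ ∃ a, a + d ≤ 2 ^ r ∧ v a = v (a + d)) ∧
        ∀ k, k < d → ¬ (0 < k ∧ ∃ a, a + k ≤ 2 ^ r ∧ v a = v (a + k)) :=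
    ⟨Nat.find hex, Nat.find_spec hex, fun k hk => Nat.find_min hex hk⟩
  have hmin : ∀ c c', c < c' → c' ≤ 2 ^ r → v c = v c' → d ≤ c' - c := by
    intro c c' h1 h2 h3
    by_contra hlt
    refine hmind (c' - c) (by omega) ⟨by omega, c, by omega, ?_⟩
    rw [show c + (c' - c) = c' from by omega]; exact h3
  -- all edges in [a, a+d) are good
  have hgoodall : ∀ c, a ≤ c → c < a + d → GGoodEdge L R (v c) (e c) (v (c + 1)) := by
    intro c h1 h2
    have h_ca : SubCong L R (v c) (v a) := chain_sub hwalk a c h1 (by omega)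
    have h_bc : SubCong L R (v (a + d)) (v (c + 1)) :=
      chain_sub hwalk (c + 1) (a + d) (by omega) hab
    rw [← heq] at h_bc
    exact good_of_sub hcons (hwalk c (by omega)) (h_ca.trans h_bc)
  rcases Nat.lt_or_ge d 2 with hd1 | hd2
  · -- d = 1 : loop at a single good edge
    have hd1' : d = 1 := by omega
    have hg := good_cases (hgoodall a le_rfl (by omega))
    have hva : v a = v (a + 1) := by rw [heq, hd1']
    rcases hg with ⟨h1, h2, -⟩ | ⟨h1, h2, -⟩ | ⟨h1, h2, -⟩ | ⟨h1, h2, -⟩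
    · exact hnonred.2 _ (by rw [← h1, ← h2, hva])
    · exact hnonred.2 _ (by rw [← h1, ← h2, hva])
    · exact hnonred.2 _ (compl_injective (by rw [← h1, ← h2, hva]))
    · exact hnonred.2 _ (compl_injective (by rw [← h1, ← h2, hva]))
  · by_cases hlab : ∃ j, a < j ∧ j < a + d ∧ (e j).1 = (e a).1
    · -- another edge in the cycle with the same label
      obtain ⟨j, hj1, hj2, hji⟩ := hlab
      have W1 : CongDed {p | ∃ i, p = (L i, R i)} (v a) (v j) :=
        walk_cong j hj1 (fun c hc hc' => ⟨hgoodall c hc (by omega), ⟨(e c).1, rfl⟩⟩)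
      have base : CongDed {p | ∃ i, p = (L i, R i)} (L (e a).1) (R (e a).1) :=
        .base ⟨(e a).1, rfl⟩
      have hne_aj : v a ≠ v j := by
        intro h
        have := hmin a j hj1 (by omega) h
        omega
      have hga := good_cases (hgoodall a le_rfl (by omega))
      have hgj := good_cases (hgoodall j (by omega) hj2)
      rw [hji] at hgj
      -- helper: j = a + 1 once we know v (a+1) = v j
      have hjeq : v (a + 1) = v j → j = a + 1 := by
        intro h
        by_contra hne
        have h1 : a + 1 < j := by omega
        have := hmin (a + 1) j h1 (by omega) h
        omega
      rcases hga with ⟨ha1, ha2, hab'⟩ | ⟨ha1, ha2, hab'⟩ | ⟨ha1, ha2, hab'⟩ | ⟨ha1, ha2, hab'⟩ <;>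
        rcases hgj with ⟨hb1, hb2, hbb⟩ | ⟨hb1, hb2, hbb⟩ | ⟨hb1, hb2, hbb⟩ | ⟨hb1, hb2, hbb⟩
      -- (1,1)
      · exact hne_aj (by rw [ha1, hb1])
      -- (1,2): good 2-cycle, pattern 1
      · have hj' : j = a + 1 := hjeq (by rw [ha2, hb1])
        refine hcon ⟨a, by omega, (e a).1, L (e a).1, R (e a).1, Or.inl ⟨rfl, rfl⟩,
          Or.inl ⟨ha1, Prod.ext_iff.mpr ⟨rfl, hab'⟩, ha2, ?_, ?_⟩⟩
        · rw [show a + 1 = j from hj'.symm]; exact Prod.ext_iff.mpr ⟨hji, hbb⟩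
        · rw [show a + 2 = j + 1 from by omega, hb2]
      -- (1,3): cross side
      · exact hweak (L (e a).1) (by rw [← hb1, ← ha1]; exact W1)
      -- (1,4)
      · exact hweak (L (e a).1)
          ((by rw [← hb1, ← ha1]; exact W1 : CongDed _ (L (e a).1) ((R (e a).1)ᶜ)).trans
            base.compl.symm)
      -- (2,1): good 2-cycle, pattern 2
      · have hj' : j = a + 1 := hjeq (by rw [ha2, hb1])
        refine hcon ⟨a, by omega, (e a).1, L (e a).1, R (e a).1, Or.inl ⟨rfl, rfl⟩,
          Or.inr ⟨ha1, Prod.ext_iff.mpr ⟨rfl, hab'⟩, ha2, ?_, ?_⟩⟩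
        · rw [show a + 1 = j from hj'.symm]; exact Prod.ext_iff.mpr ⟨hji, hbb⟩
        · rw [show a + 2 = j + 1 from by omega, hb2]
      -- (2,2)
      · exact hne_aj (by rw [ha1, hb1])
      -- (2,3)
      · exact hweak (L (e a).1)
          (base.trans (by rw [← hb1, ← ha1]; exact W1))
      -- (2,4)
      · exact hweak (L (e a).1)
          ((base.trans (by rw [← hb1, ← ha1]; exact W1)).trans base.compl.symm)
      -- (3,1)
      · exact hweak (L (e a).1)
          ((by rw [← ha1, ← hb1]; exact W1 : CongDed _ ((L (e a).1)ᶜ) (L (e a).1)).symm)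
      -- (3,2)
      · exact hweak (L (e a).1)
          (((by rw [← ha1, ← hb1]; exact W1 :
            CongDed _ ((L (e a).1)ᶜ) (R (e a).1)).trans base.symm).symm)
      -- (3,3)
      · exact hne_aj (by rw [ha1, hb1])
      -- (3,4): good 2-cycle, primed, pattern 1
      · have hj' : j = a + 1 := hjeq (by rw [ha2, hb1])
        refine hcon ⟨a, by omega, (e a).1, (L (e a).1)ᶜ, (R (e a).1)ᶜ, Or.inr ⟨rfl, rfl⟩,
          Or.inl ⟨ha1, Prod.ext_iff.mpr ⟨rfl, hab'⟩, ha2, ?_, ?_⟩⟩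
        · rw [show a + 1 = j from hj'.symm]; exact Prod.ext_iff.mpr ⟨hji, hbb⟩
        · rw [show a + 2 = j + 1 from by omega, hb2]
      -- (4,1)
      · exact hweak (L (e a).1)
          ((base.compl.trans (by rw [← ha1, ← hb1]; exact W1)).symm)
      -- (4,2)
      · exact hweak (L (e a).1)
          ((base.compl.trans ((by rw [← ha1, ← hb1]; exact W1 :
            CongDed _ ((R (e a).1)ᶜ) (R (e a).1)).trans base.symm)).symm)
      -- (4,3): good 2-cycle, primed, pattern 2
      · have hj' : j = a + 1 := hjeq (by rw [ha2, hb1])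
        refine hcon ⟨a, by omega, (e a).1, (L (e a).1)ᶜ, (R (e a).1)ᶜ, Or.inr ⟨rfl, rfl⟩,
          Or.inr ⟨ha1, Prod.ext_iff.mpr ⟨rfl, hab'⟩, ha2, ?_, ?_⟩⟩
        · rw [show a + 1 = j from hj'.symm]; exact Prod.ext_iff.mpr ⟨hji, hbb⟩
        · rw [show a + 2 = j + 1 from by omega, hb2]
      -- (4,4)
      · exact hne_aj (by rw [ha1, hb1])
    · -- no other edge with label i : contradict nonredundancy
      push_neg at hlab
      have hcd : CongDed {p | ∃ j, j ≠ (e a).1 ∧ p = (L j, R j)} (v (a + 1)) (v (a + d)) :=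
        walk_cong (a + d) (by omega) (fun c hc hc' =>
          ⟨hgoodall c (by omega) hc', ⟨(e c).1, hlab c (by omega) hc', rfl⟩⟩)
      rw [← heq] at hcd
      rcases good_cases (hgoodall a le_rfl (by omega)) with
        ⟨h1, h2, -⟩ | ⟨h1, h2, -⟩ | ⟨h1, h2, -⟩ | ⟨h1, h2, -⟩ <;> rw [h1, h2] at hcd
      · exact hnonred.1 _ hcd.symm
      · exact hnonred.1 _ hcd
      · exact hnonred.1 _ (by
          have := hcd.compl
          rw [compl_compl, compl_compl] at this
          exact this.symm)
      · exact hnonred.1 _ (by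
          have := hcd.compl
          rw [compl_compl, compl_compl] at this
          exact this)
end
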